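/- arXiv:2309.17412 — 6 statements merged into one kernel-verified Lean document; each statement's English description precedes it below -/
import Mathlib

section
/- Let A be a unital C*-algebra containing elements a₁, a₂ such that ‖aⱼ*aᵢ - δᵢⱼ·1‖ < 1/2 for all i,j ∈ {1,2}. Then A is properly infinite, i.e., A contains two isometries s, t with s*s = t*t = 1 and orthogonal range projections (ss*)(tt*) = 0. -/
/-- A unital C*-algebra is *properly infinite* if it contains two isometries with
mutually orthogonal range projections. -/
def IsProperlyInfinite (A : Type*) [Ring A] [StarRing A] : Prop :=
  ∃ s t : A, star s * s = 1 ∧ star t * t = 1 ∧ (s * star s) * (t * star t) = 0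

/-- If `b` is selfadjoint with `‖b - 1‖ ≤ ε < 1`, then `b` has a selfadjoint
"inverse square root" `r` with `r * b * r = 1` and `‖r‖ ≤ √(1 - ε)⁻¹`. -/
lemma exists_inv_sqrt {A : Type*} [CStarAlgebra A] [Nontrivial A] (b : A) (hb : IsSelfAdjoint b)
    {ε : ℝ} (hε : ε < 1) (hnorm : ‖b - 1‖ ≤ ε) :
    ∃ r : A, IsSelfAdjoint r ∧ r * b * r = 1 ∧ ‖r‖ ≤ Real.sqrt (1 - ε)⁻¹ := by
  have hspec : ∀ x ∈ spectrum ℝ b, 1 - ε ≤ x := by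
    intro x hx
    have h1 : x - 1 ∈ spectrum ℝ (b - algebraMap ℝ A 1) := by
      rw [← spectrum.sub_singleton_eq]
      exact Set.sub_mem_sub hx rfl
    have h2 : ‖x - 1‖ ≤ ‖b - algebraMap ℝ A 1‖ := spectrum.norm_le_norm_of_mem h1
    rw [map_one] at h2
    have := (abs_le.mp (h2.trans hnorm)).1
    linarith
  have hpos : ∀ x ∈ spectrum ℝ b, 0 < x := fun x hx => lt_of_lt_of_le (by linarith) (hspec x hx)
  set f : ℝ → ℝ := fun x => (Real.sqrt x)⁻¹ with hf
  have hcont : ContinuousOn f (spectrum ℝ b) := by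
    apply ContinuousOn.inv₀ (Real.continuous_sqrt.continuousOn)
    intro x hx
    exact ne_of_gt (Real.sqrt_pos.mpr (hpos x hx))
  refine ⟨cfc f b, cfc_predicate f b, ?_, ?_⟩
  · nth_rewrite 2 [← cfc_id ℝ b]
    rw [← cfc_mul f id b, ← cfc_mul _ f b, ← cfc_one ℝ b]
    · apply cfc_congr
      intro x hx
      have hx0 := hpos x hx
      have hs : Real.sqrt x ≠ 0 := ne_of_gt (Real.sqrt_pos.mpr hx0)
      simp only [f, id]
      field_simp
      simp [Real.sq_sqrt hx0.le]
  · apply norm_cfc_le (Real.sqrt_nonneg _)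
    intro x hx
    have hx1 : (0:ℝ) < 1 - ε := by linarith
    have : Real.sqrt (1 - ε) ≤ Real.sqrt x := Real.sqrt_le_sqrt (hspec x hx)
    rw [Real.sqrt_inv]
    rw [Real.norm_eq_abs, abs_of_nonneg (by positivity)]
    exact inv_anti₀ (Real.sqrt_pos.mpr hx1) this

/-- Lemma 3.3: if a unital C*-algebra contains `a₁, a₂` with
`‖aⱼ* aᵢ - δᵢⱼ 1‖ < 1/2` for all `i j`, then it is properly infinite. -/
theorem properlyInfinite_of_approx_isometries {A : Type*} [CStarAlgebra A]
    (a : Fin 2 → A)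
    (h : ∀ i j : Fin 2, ‖star (a j) * a i - (if i = j then (1 : A) else 0)‖ < 1 / 2) :
    IsProperlyInfinite A := by
  rcases subsingleton_or_nontrivial A with hA | hA
  · exact ⟨0, 0, Subsingleton.elim _ _, Subsingleton.elim _ _, Subsingleton.elim _ _⟩
  have h00 : ‖star (a 0) * a 0 - 1‖ < 1 / 2 := by simpa using h 0 0
  have h11 : ‖star (a 1) * a 1 - 1‖ < 1 / 2 := by simpa using h 1 1
  have h10 : ‖star (a 0) * a 1‖ < 1 / 2 := by simpa using h 1 0
  obtain ⟨r₁, hr₁sa, hr₁, hr₁norm⟩ :=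
    exists_inv_sqrt (star (a 0) * a 0) (.star_mul_self (a 0))
      (by norm_num : (1:ℝ)/2 < 1) h00.le
  have hr₁2 : ‖r₁‖ ≤ Real.sqrt 2 := by
    convert hr₁norm using 2; norm_num
  set s : A := a 0 * r₁ with hs
  have hss : star s * s = 1 := by
    have : star s * s = r₁ * (star (a 0) * a 0) * r₁ := by
      rw [hs, star_mul, hr₁sa.star_eq]; noncomm_ring
    rw [this, hr₁]
  set u : A := star s * a 1 with hu
  have hunorm : ‖u‖ ≤ Real.sqrt 2 * ‖star (a 0) * a 1‖ := by
    have : u = r₁ * (star (a 0) * a 1) := by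
      rw [hu, hs, star_mul, hr₁sa.star_eq, mul_assoc]
    rw [this]
    exact (norm_mul_le _ _).trans (by gcongr)
  have huu : ‖star u * u‖ < 1 / 2 := by
    rw [CStarRing.norm_star_mul_self]
    have h2 : (0:ℝ) ≤ Real.sqrt 2 := Real.sqrt_nonneg _
    have hn : (0:ℝ) ≤ ‖star (a 0) * a 1‖ := norm_nonneg _
    calc ‖u‖ * ‖u‖ ≤ (Real.sqrt 2 * ‖star (a 0) * a 1‖) * (Real.sqrt 2 * ‖star (a 0) * a 1‖) := by
          gcongr
      _ = 2 * (‖star (a 0) * a 1‖ * ‖star (a 0) * a 1‖) := by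
          rw [show Real.sqrt 2 * ‖star (a 0) * a 1‖ * (Real.sqrt 2 * ‖star (a 0) * a 1‖)
            = (Real.sqrt 2 * Real.sqrt 2) * (‖star (a 0) * a 1‖ * ‖star (a 0) * a 1‖) by ring,
            Real.mul_self_sqrt (by norm_num)]
      _ < 2 * ((1/2) * (1/2)) := by
          have := h10; nlinarith
      _ = 1 / 2 := by norm_num
  set c : A := a 1 - s * u with hc
  have hsc : star s * c = 0 := by
    rw [hc, mul_sub, ← mul_assoc, hss, one_mul, hu, sub_self]
  have hcs : star c * s = 0 := by
    have := congrArg star hsc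
    simpa [star_mul] using this
  have hcc : star c * c = star (a 1) * a 1 - star u * u := by
    have e0 : star c * (s * u) = 0 := by rw [← mul_assoc, hcs, zero_mul]
    have e1 : star c * c = star c * a 1 := by
      conv_rhs => rw [show (a 1 : A) = c + s * u from by rw [hc]; abel]
      rw [mul_add, e0, add_zero]
    have e2 : star c = star (a 1) - star u * star s := by rw [hc, star_sub, star_mul]
    rw [e1, e2, sub_mul, mul_assoc, ← hu]
  have hccnorm : ‖star c * c - 1‖ < 1 := by
    have : star c * c - 1 = (star (a 1) * a 1 - 1) - star u * u := by rw [hcc]; abel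
    rw [this]
    calc ‖(star (a 1) * a 1 - 1) - star u * u‖ ≤ ‖star (a 1) * a 1 - 1‖ + ‖star u * u‖ :=
          norm_sub_le _ _
      _ < 1/2 + 1/2 := by gcongr  -- uses h11 and huu?
      _ = 1 := by norm_num
  obtain ⟨r₂, hr₂sa, hr₂, -⟩ :=
    exists_inv_sqrt (star c * c) (.star_mul_self c) hccnorm le_rfl
  set t : A := c * r₂ with ht
  have htt : star t * t = 1 := by
    have : star t * t = r₂ * (star c * c) * r₂ := by
      rw [ht, star_mul, hr₂sa.star_eq]; noncomm_ring
    rw [this, hr₂]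
  have hst : star s * t = 0 := by
    rw [ht, ← mul_assoc, hsc, zero_mul]
  refine ⟨s, t, hss, htt, ?_⟩
  rw [mul_assoc, ← mul_assoc (star s), hst, zero_mul, mul_zero]
end

section
/- Let A be a unital C*-algebra, n ≥ 1, and x₁, …, xₙ ∈ A with Σⱼ₌₁ⁿ xⱼ*xⱼ = 1. Let s₁, s₂, … be the canonical generators of the Cuntz algebra O∞ (isometries with pairwise orthogonal range projections). Set t₁ = Σⱼ xⱼ ⊗ (sⱼ + sⱼ*) and t₂ = Σⱼ xⱼ ⊗ (s_{j+n} + s_{j+n}*) in the minimal tensor product A ⊗ O∞. Then ‖tⱼ*tᵢ - δᵢⱼ·1‖ ≤ 2√α + α, where α = ‖Σⱼ xⱼxⱼ*‖. -/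
section HaagerupAux

variable {A B : Type*} [CStarAlgebra A] [CStarAlgebra B]

/-- Auxiliary computation: `(Σ φ(x_k) s_{f k})* (Σ φ(y_l) s_{g l})`. -/
theorem haagerup_aux1 (φ : A →⋆ₐ[ℂ] B) (s : ℕ → B)
    (hs : ∀ i j : ℕ, star (s i) * s j = if i = j then (1 : B) else 0)
    (hcomm' : ∀ (a : A) (j : ℕ), Commute (φ a) (star (s j)))
    {n : ℕ} (x y : Fin n → A) (f g : Fin n → ℕ) :
    star (∑ k, φ (x k) * s (f k)) * (∑ l, φ (y l) * s (g l))
      = ∑ k, ∑ l, φ (star (x k) * y l) * (if f k = g l then 1 else 0) := by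
  have h1 : ∀ (a : A) (m : ℕ), star (s m) * φ a = φ a * star (s m) :=
    fun a m => ((hcomm' a m).eq).symm
  have h1' : ∀ (a : A) (m : ℕ) (c : B), star (s m) * (φ a * c) = φ a * (star (s m) * c) := by
    intro a m c; rw [← mul_assoc, h1, mul_assoc]
  rw [star_sum, Finset.sum_mul_sum]
  refine Finset.sum_congr rfl fun k _ => Finset.sum_congr rfl fun l _ => ?_
  rw [star_mul, ← map_star, h1, mul_assoc, h1', hs, map_mul, mul_assoc]

/-- Auxiliary computation: `(Σ φ(x_k) s_{f k}*) (Σ φ(y_l) s_{g l}*)*`. -/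
theorem haagerup_aux2 (φ : A →⋆ₐ[ℂ] B) (s : ℕ → B)
    (hs : ∀ i j : ℕ, star (s i) * s j = if i = j then (1 : B) else 0)
    (hcomm : ∀ (a : A) (j : ℕ), Commute (φ a) (s j))
    (hcomm' : ∀ (a : A) (j : ℕ), Commute (φ a) (star (s j)))
    {n : ℕ} (x y : Fin n → A) (f g : Fin n → ℕ) :
    (∑ k, φ (x k) * star (s (f k))) * star (∑ l, φ (y l) * star (s (g l)))
      = ∑ k, ∑ l, φ (x k * star (y l)) * (if f k = g l then 1 else 0) := by
  have h1' : ∀ (a : A) (m : ℕ) (c : B), star (s m) * (φ a * c) = φ a * (star (s m) * c) := by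
    intro a m c; rw [← mul_assoc, ((hcomm' a m).eq).symm, mul_assoc]
  have h2 : ∀ (a : A) (m : ℕ), s m * φ a = φ a * s m :=
    fun a m => ((hcomm a m).eq).symm
  rw [star_sum, Finset.sum_mul_sum]
  refine Finset.sum_congr rfl fun k _ => Finset.sum_congr rfl fun l _ => ?_
  rw [star_mul, star_star, ← map_star, h2, mul_assoc, h1', hs, map_mul, mul_assoc]

end HaagerupAux

/-- Lemma 3.4 (Haagerup).  We model the minimal tensor product `A ⊗ O∞` abstractly: `B` is a
unital C*-algebra containing an isometric unital copy `φ` of `A` (the slice `a ↦ a ⊗ 1`) and a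
sequence `s` of isometries with pairwise orthogonal ranges (the generators `1 ⊗ sⱼ` of a copy of
`O∞`), commuting with the copy of `A`.  If `Σ xⱼ*xⱼ = 1` in `A` and
`t₁ = Σ xⱼ ⊗ (sⱼ + sⱼ*)`, `t₂ = Σ xⱼ ⊗ (s_{j+n} + s_{j+n}*)`, then
`‖tⱼ*tᵢ - δᵢⱼ 1‖ ≤ 2√α + α` where `α = ‖Σ xⱼxⱼ*‖`. -/
theorem haagerup_tensor_estimate {A B : Type*} [CStarAlgebra A] [CStarAlgebra B]
    (φ : A →⋆ₐ[ℂ] B) (hφ : Isometry φ)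
    (s : ℕ → B)
    (hs : ∀ i j : ℕ, star (s i) * s j = if i = j then (1 : B) else 0)
    (hcomm : ∀ (a : A) (j : ℕ), Commute (φ a) (s j))
    (hcomm' : ∀ (a : A) (j : ℕ), Commute (φ a) (star (s j)))
    (n : ℕ) (hn : 1 ≤ n) (x : Fin n → A)
    (hx : (∑ j, star (x j) * x j) = 1)
    (α : ℝ) (hα : α = ‖∑ j, x j * star (x j)‖)
    (t : Fin 2 → B)
    (ht0 : t 0 = ∑ j : Fin n, φ (x j) * (s j + star (s j)))
    (ht1 : t 1 = ∑ j : Fin n, φ (x j) * (s (j + n) + star (s (j + n))))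
    (i j : Fin 2) :
    ‖star (t j) * t i - (if i = j then (1 : B) else 0)‖ ≤ 2 * Real.sqrt α + α := by
  have hα0 : 0 ≤ α := hα ▸ norm_nonneg _
  have hnorm : ∀ a : A, ‖φ a‖ = ‖a‖ := fun a => hφ.norm_map_of_map_zero (map_zero φ) a
  set f : Fin 2 → Fin n → ℕ := fun i k => (k : ℕ) + (i : ℕ) * n with hfdef
  set v : Fin 2 → B := fun i => ∑ k, φ (x k) * s (f i k) with hvdef
  set w : Fin 2 → B := fun i => ∑ k, φ (x k) * star (s (f i k)) with hwdef
  have ht : ∀ i : Fin 2, t i = v i + w i := by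
    intro i
    fin_cases i
    · rw [show ((⟨0, by norm_num⟩ : Fin 2)) = 0 from rfl, ht0]
      simp only [hvdef, hwdef, hfdef, ← Finset.sum_add_distrib]
      refine Finset.sum_congr rfl fun k _ => ?_
      simp [mul_add]
    · rw [show ((⟨1, by norm_num⟩ : Fin 2)) = 1 from rfl, ht1]
      simp only [hvdef, hwdef, hfdef, ← Finset.sum_add_distrib]
      refine Finset.sum_congr rfl fun k _ => ?_
      simp [mul_add]
  have hvv : ∀ a b : Fin 2, star (v b) * v a = if a = b then (1 : B) else 0 := by
    intro a b
    simp only [hvdef]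
    rw [haagerup_aux1 φ s hs hcomm' x x (f b) (f a)]
    by_cases hab : a = b
    · subst hab
      have hcond : ∀ k l : Fin n, (f a k = f a l) ↔ (k = l) := by
        intro k l
        simp [hfdef, Fin.val_inj]
      simp only [hcond, mul_ite, mul_one, mul_zero, if_true]
      calc ∑ k : Fin n, ∑ l : Fin n, (if k = l then φ (star (x k) * x l) else 0)
          = ∑ k : Fin n, φ (star (x k) * x k) := by
            refine Finset.sum_congr rfl fun k _ => ?_
            rw [Finset.sum_ite_eq, if_pos (Finset.mem_univ k)]
        _ = 1 := by rw [← map_sum, hx, map_one]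
    · rw [if_neg hab]
      refine Finset.sum_eq_zero fun k _ => Finset.sum_eq_zero fun l _ => ?_
      have hdisj : f b k ≠ f a l := by
        intro heq
        have hk := k.isLt; have hl := l.isLt
        have hpa := a.isLt; have hpb := b.isLt
        have hp : (b : ℕ) = 0 ∨ (b : ℕ) = 1 := by omega
        have hq : (a : ℕ) = 0 ∨ (a : ℕ) = 1 := by omega
        have hpq' : (a : ℕ) ≠ (b : ℕ) := fun h => hab (Fin.ext h)
        simp only [hfdef] at heq
        rcases hp with hp | hp <;> rcases hq with hq | hq <;> rw [hp, hq] at heq <;> omega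
      rw [if_neg hdisj, mul_zero]
  have hww : ∀ a : Fin 2, w a * star (w a) = φ (∑ k, x k * star (x k)) := by
    intro a
    simp only [hwdef]
    rw [haagerup_aux2 φ s hs hcomm hcomm' x x (f a) (f a)]
    have hcond : ∀ k l : Fin n, (f a k = f a l) ↔ (k = l) := by
      intro k l
      simp [hfdef, Fin.val_inj]
    simp only [hcond, mul_ite, mul_one, mul_zero]
    rw [map_sum]
    refine Finset.sum_congr rfl fun k _ => ?_
    rw [Finset.sum_ite_eq, if_pos (Finset.mem_univ k)]
  have hnv : ∀ a : Fin 2, ‖v a‖ ≤ 1 := by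
    intro a
    have h := hvv a a
    rw [if_pos rfl] at h
    have h2 : ‖star (v a) * v a‖ = ‖v a‖ * ‖v a‖ := CStarRing.norm_star_mul_self
    rw [h] at h2
    have h1 : ‖(1 : B)‖ * ‖(1 : B)‖ = ‖(1 : B)‖ := by
      rw [← CStarRing.norm_star_mul_self]
      simp
    have hone : ‖(1 : B)‖ ≤ 1 := by nlinarith [norm_nonneg (1 : B)]
    nlinarith [norm_nonneg (v a), norm_nonneg (1 : B)]
  have hnw : ∀ a : Fin 2, ‖w a‖ ≤ Real.sqrt α := by
    intro a
    have h2 : ‖w a‖ * ‖w a‖ = α := by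
      rw [← CStarRing.norm_self_mul_star, hww a, hnorm, hα]
    have : ‖w a‖ = Real.sqrt α := by
      rw [← h2, Real.sqrt_mul_self (norm_nonneg _)]
    exact this.le
  have hkey : star (t j) * t i - (if i = j then (1 : B) else 0)
      = star (v j) * w i + (star (w j) * v i + star (w j) * w i) := by
    rw [ht i, ht j, star_add, add_mul, mul_add, mul_add, hvv i j]
    abel
  rw [hkey]
  have A1 : ‖star (v j) * w i‖ ≤ 1 * Real.sqrt α := by
    calc ‖star (v j) * w i‖ ≤ ‖star (v j)‖ * ‖w i‖ := norm_mul_le _ _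
      _ ≤ 1 * Real.sqrt α := by
          rw [norm_star]
          exact mul_le_mul (hnv j) (hnw i) (norm_nonneg _) zero_le_one
  have A2 : ‖star (w j) * v i‖ ≤ Real.sqrt α * 1 := by
    calc ‖star (w j) * v i‖ ≤ ‖star (w j)‖ * ‖v i‖ := norm_mul_le _ _
      _ ≤ Real.sqrt α * 1 := by
          rw [norm_star]
          exact mul_le_mul (hnw j) (hnv i) (norm_nonneg _) (Real.sqrt_nonneg _)
  have A3 : ‖star (w j) * w i‖ ≤ Real.sqrt α * Real.sqrt α := by
    calc ‖star (w j) * w i‖ ≤ ‖star (w j)‖ * ‖w i‖ := norm_mul_le _ _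
      _ ≤ Real.sqrt α * Real.sqrt α := by
          rw [norm_star]
          exact mul_le_mul (hnw j) (hnw i) (norm_nonneg _) (Real.sqrt_nonneg _)
  have hsq : Real.sqrt α * Real.sqrt α = α := Real.mul_self_sqrt hα0
  have B1 := norm_add_le (star (v j) * w i) (star (w j) * v i + star (w j) * w i)
  have B2 := norm_add_le (star (w j) * v i) (star (w j) * w i)
  linarith
end

section
/- Let {Aₙ} be a sequence of unital C*-algebras and ω a free ultrafilter on ℕ, and let ∏_ω Aₙ denote the ultraproduct (the quotient of the ℓ∞-product by the ideal of sequences whose norms tend to 0 along ω). Then ∏_ω Aₙ is properly infinite if and only if the set {n ∈ ℕ : Aₙ is properly infinite} belongs to ω. -/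
open scoped ENNReal

set_option maxHeartbeats 1000000

section Stability

open scoped Pointwise

variable {C : Type*} [CStarAlgebra C] [Nontrivial C]

/-- The auxiliary function `t ↦ (√(max t (1/2)))⁻¹`, a globally continuous substitute for
`t ↦ t^(-1/2)`. -/
noncomputable def invSqrtFun : ℝ → ℝ := fun t => (Real.sqrt (max t 2⁻¹))⁻¹

lemma invSqrtFun_continuous : Continuous invSqrtFun := by
  apply Continuous.inv₀
  · exact Real.continuous_sqrt.comp (continuous_id.max continuous_const)
  · intro t
    have h : (0:ℝ) < max t 2⁻¹ := lt_max_of_lt_right (by norm_num)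
    exact (Real.sqrt_pos.mpr h).ne'

lemma invSqrtFun_eval {t : ℝ} (ht : 2⁻¹ ≤ t) : invSqrtFun t = (Real.sqrt t)⁻¹ := by
  simp [invSqrtFun, max_eq_left ht]

lemma invSqrtFun_mul_self {t : ℝ} (ht : 2⁻¹ ≤ t) : invSqrtFun t * invSqrtFun t = t⁻¹ := by
  rw [invSqrtFun_eval ht, ← mul_inv]
  rw [Real.mul_self_sqrt (by linarith)]

/-- Spectrum of an element close to `1` is close to `1`. -/
lemma spec_close_one {h : C} {ε : ℝ} (hd : ‖h - 1‖ ≤ ε) :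
    ∀ μ ∈ spectrum ℝ h, |μ - 1| ≤ ε := by
  intro μ hμ
  have h1 : μ - 1 ∈ spectrum ℝ h - {(1:ℝ)} := Set.sub_mem_sub hμ rfl
  rw [spectrum.sub_singleton_eq] at h1
  have h2 := spectrum.norm_le_norm_of_mem h1
  rw [map_one] at h2
  exact (Real.norm_eq_abs _ ▸ h2).trans hd

/-- An element commuting with a selfadjoint element commutes with its continuous functional
calculus. -/
lemma commute_cfc_of_commute {h b : C} (hsa : IsSelfAdjoint h) (hc : Commute h b)
    (f : ℝ → ℝ) : Commute (cfc f h) b := by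
  by_cases hf : ContinuousOn f (spectrum ℝ h)
  · rw [cfc_apply f h hsa hf]
    have key : ∀ g : C(spectrum ℝ h, ℝ), Commute (cfcHom hsa g) b := by
      intro g
      let T : Subalgebra ℝ C(spectrum ℝ h, ℝ) :=
        (Subalgebra.centralizer ℝ {b}).comap ((cfcHom hsa).toAlgHom)
      have hmem : ∀ x : C(spectrum ℝ h, ℝ),
          x ∈ T ↔ b * cfcHom hsa x = cfcHom hsa x * b := by
        intro x
        simp [T, Subalgebra.mem_comap, Subalgebra.mem_centralizer_iff]
      have hT : IsClosed (T : Set C(spectrum ℝ h, ℝ)) := by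
        have heq : (T : Set C(spectrum ℝ h, ℝ))
            = {x | b * cfcHom hsa x = cfcHom hsa x * b} := by
          ext x; exact hmem x
        rw [heq]
        exact isClosed_eq (continuous_const.mul (cfcHom_continuous hsa))
          ((cfcHom_continuous hsa).mul continuous_const)
      have hX : cfcHom hsa (Polynomial.toContinuousMapOnAlgHom (spectrum ℝ h)
          Polynomial.X) = h := by
        have hrw : Polynomial.toContinuousMapOnAlgHom (spectrum ℝ h) Polynomial.X
            = (ContinuousMap.id ℝ).restrict (spectrum ℝ h) := by
          ext x
          simp
        rw [hrw]
        exact cfcHom_id hsa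
      have hpoly : polynomialFunctions (spectrum ℝ h) ≤ T := by
        rw [polynomialFunctions.eq_adjoin_X]
        apply Algebra.adjoin_le
        rintro x hx
        rw [Set.mem_singleton_iff] at hx
        subst hx
        rw [SetLike.mem_coe, hmem, hX]
        exact hc.eq.symm
      have hle : (polynomialFunctions (spectrum ℝ h)).topologicalClosure ≤ T :=
        Subalgebra.topologicalClosure_minimal hpoly hT
      rw [polynomialFunctions.topologicalClosure] at hle
      exact ((hmem g).mp (hle trivial)).symm
    exact key _
  · rw [cfc_apply_of_not_continuousOn h hf]
    exact Commute.zero_left b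

/-- Approximate inverse square root package. -/
lemma exists_invSqrt {h : C} (hsa : IsSelfAdjoint h) {ε : ℝ}
    (hε : ε ≤ 4⁻¹) (hd : ‖h - 1‖ ≤ ε) :
    ∃ e : C, IsSelfAdjoint e ∧ e * h * e = 1 ∧ (e * e) * h = 1 ∧
      ‖e * e - 1‖ ≤ 2 * ε ∧ ∀ b : C, Commute h b → Commute e b := by
  have hε0 : 0 ≤ ε := le_trans (norm_nonneg _) hd
  have hspec : ∀ μ ∈ spectrum ℝ h, 2⁻¹ ≤ μ := by
    intro μ hμ
    have h1 := abs_le.mp (spec_close_one hd μ hμ)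
    linarith [h1.1]
  have hcont : ContinuousOn invSqrtFun (spectrum ℝ h) :=
    invSqrtFun_continuous.continuousOn
  set e := cfc invSqrtFun h with he
  have hee : e * e = cfc (fun t => invSqrtFun t * invSqrtFun t) h := by
    rw [he, ← cfc_mul invSqrtFun invSqrtFun h hcont hcont]
  refine ⟨e, cfc_predicate invSqrtFun h, ?_, ?_, ?_, ?_⟩
  · -- e * h * e = 1
    have expand : cfc (fun t => invSqrtFun t * (t * invSqrtFun t)) h
        = e * (h * e) := by
      have e1 : cfc (fun t => invSqrtFun t * (t * invSqrtFun t)) h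
          = cfc invSqrtFun h * cfc (fun t : ℝ => t * invSqrtFun t) h :=
        cfc_mul _ _ h hcont ((continuous_id.mul invSqrtFun_continuous).continuousOn)
      have e2 : cfc (fun t : ℝ => t * invSqrtFun t) h
          = cfc (fun t : ℝ => t) h * cfc invSqrtFun h :=
        cfc_mul _ _ h continuous_id.continuousOn hcont
      rw [e1, e2, cfc_id' ℝ h hsa]
    have hone : cfc (fun t => invSqrtFun t * (t * invSqrtFun t)) h = 1 := by
      have : cfc (fun t => invSqrtFun t * (t * invSqrtFun t)) h
          = cfc (fun _ : ℝ => (1:ℝ)) h := by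
        apply cfc_congr
        intro μ hμ
        have h2 := hspec μ hμ
        have h3 : (0:ℝ) < μ := lt_of_lt_of_le (by norm_num) h2
        simp only
        rw [mul_comm μ (invSqrtFun μ), ← mul_assoc, invSqrtFun_mul_self h2,
          inv_mul_cancel₀ h3.ne']
      rw [this, cfc_const (1:ℝ) h hsa, map_one]
    rw [mul_assoc]
    rw [← expand, hone]
  · -- (e * e) * h = 1
    have expand : cfc (fun t => invSqrtFun t * invSqrtFun t * t) h
        = (e * e) * h := by
      have e1 : cfc (fun t => invSqrtFun t * invSqrtFun t * t) h
          = cfc (fun t : ℝ => invSqrtFun t * invSqrtFun t) h * cfc (fun t : ℝ => t) h :=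
        cfc_mul _ _ h (hcont.mul hcont) continuous_id.continuousOn
      rw [e1, cfc_id' ℝ h hsa, ← hee]
    have hone : cfc (fun t => invSqrtFun t * invSqrtFun t * t) h = 1 := by
      have : cfc (fun t => invSqrtFun t * invSqrtFun t * t) h
          = cfc (fun _ : ℝ => (1:ℝ)) h := by
        apply cfc_congr
        intro μ hμ
        have h2 := hspec μ hμ
        have h3 : (0:ℝ) < μ := lt_of_lt_of_le (by norm_num) h2
        simp only
        rw [invSqrtFun_mul_self h2, inv_mul_cancel₀ h3.ne']
      rw [this, cfc_const (1:ℝ) h hsa, map_one]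
    rw [← expand, hone]
  · -- ‖e * e - 1‖ ≤ 2 * ε
    have hsub : cfc (fun t => invSqrtFun t * invSqrtFun t - 1) h = e * e - 1 := by
      rw [cfc_sub (f := fun t => invSqrtFun t * invSqrtFun t) (g := fun _ => (1:ℝ)) h
        (hcont.mul hcont) continuousOn_const]
      rw [← hee, cfc_const (1:ℝ) h hsa, map_one]
    rw [← hsub]
    apply norm_cfc_le (by positivity)
    intro μ hμ
    have h2 := hspec μ hμ
    have h3 : (0:ℝ) < μ := lt_of_lt_of_le (by norm_num) h2
    have h4 := abs_le.mp (spec_close_one hd μ hμ)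
    rw [invSqrtFun_mul_self h2]
    have hμinv : μ⁻¹ ≤ 2 := by
      rw [inv_le_comm₀ h3 (by norm_num)]
      linarith
    have heq2 : μ⁻¹ - 1 = (1 - μ) * μ⁻¹ := by field_simp
    rw [Real.norm_eq_abs, heq2, abs_mul, abs_inv]
    calc |1 - μ| * |μ|⁻¹ ≤ ε * 2 := by
          apply mul_le_mul _ _ (by positivity) hε0
          · rw [abs_sub_comm]; exact abs_le.mpr h4
          · rwa [abs_of_pos h3]
      _ = 2 * ε := mul_comm _ _
  · intro b hb
    exact commute_cfc_of_commute hsa hb invSqrtFun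

/-- Polar decomposition: an approximate isometry is close to an exact isometry. -/
lemma exists_isometry {a : C} {ε : ℝ} (hε : ε ≤ 4⁻¹) (h1 : ‖star a * a - 1‖ ≤ ε) :
    ∃ s : C, star s * s = 1 ∧ ‖s * star s - a * star a‖ ≤ 3 * ε := by
  have hε0 : 0 ≤ ε := le_trans (norm_nonneg _) h1
  have hsa : IsSelfAdjoint (star a * a) := IsSelfAdjoint.star_mul_self a
  obtain ⟨e, hesa, hehe, heeh, heenorm, -⟩ := exists_invSqrt hsa hε h1
  refine ⟨a * e, ?_, ?_⟩
  · have hexp : star (a * e) * (a * e) = e * (star a * a) * e := by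
      rw [star_mul, hesa.star_eq]
      noncomm_ring
    rw [hexp, hehe]
  · have hrw : (a * e) * star (a * e) - a * star a = a * ((e * e - 1) * star a) := by
      rw [star_mul, hesa.star_eq]
      noncomm_ring
    have hna : ‖a‖ * ‖a‖ ≤ 1 + ε := by
      rw [← CStarRing.norm_star_mul_self]
      calc ‖star a * a‖ = ‖(star a * a - 1) + 1‖ := by rw [sub_add_cancel]
        _ ≤ ‖star a * a - 1‖ + ‖(1:C)‖ := norm_add_le _ _
        _ ≤ ε + 1 := by rw [norm_one]; linarith
        _ = 1 + ε := by ring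
    rw [hrw]
    calc ‖a * ((e * e - 1) * star a)‖ ≤ ‖a‖ * (‖e * e - 1‖ * ‖star a‖) :=
          le_trans (norm_mul_le _ _) (by gcongr; exact norm_mul_le _ _)
      _ = ‖e * e - 1‖ * (‖a‖ * ‖a‖) := by rw [norm_star]; ring
      _ ≤ (2 * ε) * (1 + ε) := by
          apply mul_le_mul heenorm hna (by positivity) (by positivity)
      _ ≤ 3 * ε := by nlinarith

/-- Two exact isometries whose range projections are close to orthogonal can be corrected to
exact isometries with orthogonal range projections. -/
lemma properlyInfinite_of_close {s t : C} (hs : star s * s = 1) (ht : star t * t = 1)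
    (hpt : ‖(s * star s) * (t * star t)‖ ≤ 2⁻¹) : IsProperlyInfinite C := by
  obtain ⟨p, hp⟩ : ∃ p : C, p = s * star s := ⟨_, rfl⟩
  obtain ⟨q, hq⟩ : ∃ q : C, q = t * star t := ⟨_, rfl⟩
  rw [← hp, ← hq] at hpt
  have hps : IsSelfAdjoint p := by rw [hp]; exact IsSelfAdjoint.mul_star_self s
  have hqs : IsSelfAdjoint q := by rw [hq]; exact IsSelfAdjoint.mul_star_self t
  have hp2 : p * p = p := by
    calc p * p = s * ((star s * s) * star s) := by rw [hp]; noncomm_ring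
      _ = p := by rw [hs, one_mul, hp]
  have hq2 : q * q = q := by
    calc q * q = t * ((star t * t) * star t) := by rw [hq]; noncomm_ring
      _ = q := by rw [ht, one_mul, hq]
  have hqpq : q * p * q = star (p * q) * (p * q) := by
    calc q * p * q = q * (p * p) * q := by rw [hp2]
      _ = star (p * q) * (p * q) := by rw [star_mul, hps.star_eq, hqs.star_eq]; noncomm_ring
  have hnqpq : ‖q * p * q‖ ≤ 4⁻¹ := by
    rw [hqpq, CStarRing.norm_star_mul_self]
    calc ‖p * q‖ * ‖p * q‖ ≤ 2⁻¹ * 2⁻¹ :=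
          mul_le_mul hpt hpt (norm_nonneg _) (by norm_num)
      _ = 4⁻¹ := by norm_num
  obtain ⟨k, hk⟩ : ∃ k : C, k = 1 - q * p * q := ⟨_, rfl⟩
  have hksa : IsSelfAdjoint k := by
    rw [hk]
    exact ((IsSelfAdjoint.one (R := C))).sub (hqpq ▸ IsSelfAdjoint.star_mul_self (p * q))
  have hkd : ‖k - 1‖ ≤ 4⁻¹ := by
    rw [hk, sub_sub_cancel_left, norm_neg]
    exact hnqpq
  obtain ⟨m, hmsa, hmkm, hmmk, -, hcomm⟩ := exists_invSqrt hksa (le_refl _) hkd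
  have hqk : Commute k q := by
    have h1 : q * (q * p * q) = q * p * q := by
      calc q * (q * p * q) = (q * q) * p * q := by noncomm_ring
        _ = q * p * q := by rw [hq2]
    have h2 : (q * p * q) * q = q * p * q := by
      calc (q * p * q) * q = q * p * (q * q) := by noncomm_ring
        _ = q * p * q := by rw [hq2]
    show k * q = q * k
    rw [hk, sub_mul, mul_sub, one_mul, mul_one, h1, h2]
  have hmq : Commute m q := hcomm q hqk
  have hmk : Commute m k := hcomm k (Commute.refl k)
  obtain ⟨c, hc⟩ : ∃ c : C, c = (1 - p) * q := ⟨_, rfl⟩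
  have h1p : (1 - p) * (1 - p) = 1 - p := by
    calc (1 - p) * (1 - p) = 1 - p - p + p * p := by noncomm_ring
      _ = 1 - p := by rw [hp2]; abel
  have hcsc : star c * c = k - (1 - q) := by
    have h1psa : IsSelfAdjoint (1 - p) := ((IsSelfAdjoint.one (R := C))).sub hps
    calc star c * c = q * ((1 - p) * (1 - p)) * q := by
          rw [hc, star_mul, hqs.star_eq, h1psa.star_eq]; noncomm_ring
      _ = q * (1 - p) * q := by rw [h1p]
      _ = q * q - q * p * q := by noncomm_ring
      _ = k - (1 - q) := by rw [hq2, hk]; abel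
  obtain ⟨w, hw⟩ : ∃ w : C, w = c * m := ⟨_, rfl⟩
  have hww : star w * w = q := by
    have hexp : star w * w = m * (star c * c) * m := by
      rw [hw, star_mul, hmsa.star_eq]; noncomm_ring
    rw [hexp, hcsc]
    have hsplit : m * (k - (1 - q)) * m = m * k * m - m * ((1 - q) * m) := by
      noncomm_ring
    rw [hsplit, hmkm]
    have hm1q : Commute m (1 - q) := (Commute.one_right m).sub_right hmq
    have hstep : m * ((1 - q) * m) = (1 - q) * (m * m) := by
      calc m * ((1 - q) * m) = (m * (1 - q)) * m := by rw [mul_assoc]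
        _ = ((1 - q) * m) * m := by rw [hm1q.eq]
        _ = (1 - q) * (m * m) := by rw [mul_assoc]
    have h1qk : (1 - q) * k = 1 - q := by
      have hz : (1 - q) * q = 0 := by rw [sub_mul, one_mul, hq2, sub_self]
      have hz2 : (1 - q) * (q * p * q) = 0 := by
        calc (1 - q) * (q * p * q) = ((1 - q) * q) * (p * q) := by noncomm_ring
          _ = 0 := by rw [hz, zero_mul]
      rw [hk, mul_sub, mul_one, hz2, sub_zero]
    have hkmm : k * (m * m) = 1 := by
      have : Commute (m * m) k := hmk.mul_left hmk
      rw [← this.eq, hmmk]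
    have hfin : (1 - q) * (m * m) = 1 - q := by
      calc (1 - q) * (m * m) = ((1 - q) * k) * (m * m) := by rw [h1qk]
        _ = (1 - q) * (k * (m * m)) := by rw [mul_assoc]
        _ = 1 - q := by rw [hkmm, mul_one]
    rw [hstep, hfin, sub_sub_cancel]
  have hpw : p * w = 0 := by
    have : p * (1 - p) = 0 := by rw [mul_sub, mul_one, hp2, sub_self]
    calc p * w = (p * (1 - p)) * (q * m) := by rw [hw, hc]; noncomm_ring
      _ = 0 := by rw [this, zero_mul]
  refine ⟨s, w * t, hs, ?_, ?_⟩
  · calc star (w * t) * (w * t)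
        = star t * (star w * w) * t := by rw [star_mul]; noncomm_ring
      _ = star t * q * t := by rw [hww]
      _ = (star t * t) * (star t * t) := by rw [hq]; noncomm_ring
      _ = 1 := by rw [ht, one_mul]
  · rw [← hp]
    calc p * ((w * t) * star (w * t))
        = (p * w) * (t * star t * star w) := by rw [star_mul]; noncomm_ring
      _ = 0 := by rw [hpw, zero_mul]

/-- Approximate isometries with approximately orthogonal ranges imply proper infiniteness. -/
lemma isProperlyInfinite_of_approx {a b : C}
    (h1 : ‖star a * a - 1‖ ≤ 16⁻¹) (h2 : ‖star b * b - 1‖ ≤ 16⁻¹)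
    (h3 : ‖(a * star a) * (b * star b)‖ ≤ 16⁻¹) : IsProperlyInfinite C := by
  have hε : (16:ℝ)⁻¹ ≤ 4⁻¹ := by norm_num
  obtain ⟨s, hs, hsn⟩ := exists_isometry hε h1
  obtain ⟨t, ht, htn⟩ := exists_isometry hε h2
  apply properlyInfinite_of_close hs ht
  have hq1 : ‖t * star t‖ ≤ 1 := by
    rw [CStarRing.norm_self_mul_star]
    have htt : ‖t‖ * ‖t‖ = 1 := by rw [← CStarRing.norm_star_mul_self, ht, norm_one]
    rw [htt]
  have haa : ‖a * star a‖ ≤ 1 + 16⁻¹ := by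
    rw [CStarRing.norm_self_mul_star, ← CStarRing.norm_star_mul_self]
    calc ‖star a * a‖ = ‖(star a * a - 1) + 1‖ := by rw [sub_add_cancel]
      _ ≤ ‖star a * a - 1‖ + ‖(1:C)‖ := norm_add_le _ _
      _ ≤ 16⁻¹ + 1 := by rw [norm_one]; linarith
      _ = 1 + 16⁻¹ := by ring
  have hdecomp : (s * star s) * (t * star t)
      = (s * star s - a * star a) * (t * star t)
        + ((a * star a) * (t * star t - b * star b)
        + (a * star a) * (b * star b)) := by noncomm_ring
  rw [hdecomp]
  have hb1 : ‖(s * star s - a * star a) * (t * star t)‖ ≤ 3 * 16⁻¹ := by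
    calc ‖(s * star s - a * star a) * (t * star t)‖
        ≤ ‖s * star s - a * star a‖ * ‖t * star t‖ := norm_mul_le _ _
      _ ≤ (3 * 16⁻¹) * 1 := by
          apply mul_le_mul hsn hq1 (norm_nonneg _) (by positivity)
      _ = 3 * 16⁻¹ := by ring
  have hb2 : ‖(a * star a) * (t * star t - b * star b)‖ ≤ (1 + 16⁻¹) * (3 * 16⁻¹) := by
    calc ‖(a * star a) * (t * star t - b * star b)‖
        ≤ ‖a * star a‖ * ‖t * star t - b * star b‖ := norm_mul_le _ _
      _ ≤ (1 + 16⁻¹) * (3 * 16⁻¹) := by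
          apply mul_le_mul haa htn (norm_nonneg _) (by positivity)
  calc ‖(s * star s - a * star a) * (t * star t)
        + ((a * star a) * (t * star t - b * star b)
        + (a * star a) * (b * star b))‖
      ≤ ‖(s * star s - a * star a) * (t * star t)‖
        + (‖(a * star a) * (t * star t - b * star b)‖
        + ‖(a * star a) * (b * star b)‖) :=
        le_trans (norm_add_le _ _) (by gcongr; exact norm_add_le _ _)
    _ ≤ 3 * 16⁻¹ + ((1 + 16⁻¹) * (3 * 16⁻¹) + 16⁻¹) := by
        gcongr
    _ ≤ 2⁻¹ := by norm_num

end Stability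

/-- Lemma 4.6 for `k = 1`.  The ultraproduct `∏_ω Aₙ` is modelled abstractly: it is a unital
C*-algebra `B` together with a surjective unital `*`-homomorphism `π` from the ℓ∞-product
`lp A ∞` such that `‖π x‖ = lim_ω ‖xₙ‖` for every bounded sequence `x` (this characterizes the
quotient of `∏ₙ Aₙ` by the ideal of sequences whose norm tends to `0` along `ω`).  Then `B` is
properly infinite iff `{n : Aₙ is properly infinite} ∈ ω`. -/
theorem ultraproduct_properlyInfinite_iff (A : ℕ → Type*) [∀ n, CStarAlgebra (A n)]
    [∀ n, Nontrivial (A n)] (ω : Ultrafilter ℕ) (hfree : ∀ n : ℕ, {n} ∉ ω)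
    (B : Type*) [CStarAlgebra B] (π : lp A ∞ →⋆ₐ[ℂ] B) (hsurj : Function.Surjective π)
    (hnorm : ∀ x : lp A ∞, Filter.Tendsto (fun n => ‖x n‖) (ω : Filter ℕ) (nhds ‖π x‖)) :
    IsProperlyInfinite B ↔ {n : ℕ | IsProperlyInfinite (A n)} ∈ ω := by
  classical
  have coord1 : ∀ (u : lp A ∞) (n : ℕ),
      (star u * u - 1 : lp A ∞) n = star (u n) * u n - 1 := by
    intro u n
    simp [lp.coeFn_sub, lp.infty_coeFn_mul, lp.infty_coeFn_one, lp.star_apply,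
      Pi.sub_apply, Pi.mul_apply, Pi.one_apply]
    rfl
  have coord2 : ∀ (u v : lp A ∞) (n : ℕ),
      ((u * star u) * (v * star v) : lp A ∞) n
        = (u n * star (u n)) * (v n * star (v n)) := by
    intro u v n
    simp [lp.infty_coeFn_mul, lp.star_apply, Pi.mul_apply]
  constructor
  · rintro ⟨s, t, hs, ht, hst⟩
    obtain ⟨x, rfl⟩ := hsurj s
    obtain ⟨y, rfl⟩ := hsurj t
    have hd1 : π (star x * x - 1) = 0 := by
      rw [map_sub, map_mul, map_star, map_one, hs, sub_self]
    have hd2 : π (star y * y - 1) = 0 := by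
      rw [map_sub, map_mul, map_star, map_one, ht, sub_self]
    have hd3 : π ((x * star x) * (y * star y)) = 0 := by
      rw [map_mul, map_mul, map_mul, map_star, map_star, hst]
    have t1 : Filter.Tendsto (fun n => ‖(star x * x - 1 : lp A ∞) n‖)
        (ω : Filter ℕ) (nhds 0) := by simpa [hd1] using hnorm (star x * x - 1)
    have t2 : Filter.Tendsto (fun n => ‖(star y * y - 1 : lp A ∞) n‖)
        (ω : Filter ℕ) (nhds 0) := by simpa [hd2] using hnorm (star y * y - 1)
    have t3 : Filter.Tendsto (fun n => ‖((x * star x) * (y * star y) : lp A ∞) n‖)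
        (ω : Filter ℕ) (nhds 0) := by
      simpa [hd3] using hnorm ((x * star x) * (y * star y))
    have hlt : (0:ℝ) < 16⁻¹ := by norm_num
    have e1 := t1.eventually_lt_const hlt
    have e2 := t2.eventually_lt_const hlt
    have e3 := t3.eventually_lt_const hlt
    have ePI : ∀ᶠ n in (ω : Filter ℕ), IsProperlyInfinite (A n) := by
      filter_upwards [e1, e2, e3] with n h1 h2 h3
      rw [coord1 x n] at h1
      rw [coord1 y n] at h2
      rw [coord2 x y n] at h3
      exact isProperlyInfinite_of_approx h1.le h2.le h3.le
    exact Ultrafilter.mem_coe.mp ePI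
  · intro hS
    have hwit : ∀ n, ∃ st : A n × A n,
        (IsProperlyInfinite (A n) → star st.1 * st.1 = 1 ∧ star st.2 * st.2 = 1 ∧
          (st.1 * star st.1) * (st.2 * star st.2) = 0) ∧ ‖st.1‖ ≤ 1 ∧ ‖st.2‖ ≤ 1 := by
      intro n
      by_cases h : IsProperlyInfinite (A n)
      · obtain ⟨s, t, h1, h2, h3⟩ := h
        have hns : ‖s‖ ≤ 1 := by
          have hss := CStarRing.norm_star_mul_self (x := s)
          rw [h1, norm_one] at hss
          nlinarith [norm_nonneg s]
        have hnt : ‖t‖ ≤ 1 := by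
          have htt := CStarRing.norm_star_mul_self (x := t)
          rw [h2, norm_one] at htt
          nlinarith [norm_nonneg t]
        exact ⟨(s, t), fun _ => ⟨h1, h2, h3⟩, hns, hnt⟩
      · exact ⟨(1, 1), fun h' => absurd h' h, by simp, by simp⟩
    choose st hrel hn1 hn2 using hwit
    have hx : Memℓp (fun n => (st n).1) ∞ :=
      memℓp_infty ⟨1, by rintro - ⟨n, rfl⟩; exact hn1 n⟩
    have hy : Memℓp (fun n => (st n).2) ∞ :=
      memℓp_infty ⟨1, by rintro - ⟨n, rfl⟩; exact hn2 n⟩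
    let x : lp A ∞ := ⟨_, hx⟩
    let y : lp A ∞ := ⟨_, hy⟩
    have hxco : ∀ n, x n = (st n).1 := fun n => rfl
    have hyco : ∀ n, y n = (st n).2 := fun n => rfl
    have key : ∀ z : lp A ∞, {n | (z : ∀ n, A n) n = 0} ∈ ω → π z = 0 := by
      intro z hz
      have h1 : ∀ᶠ n in (ω : Filter ℕ), (z : ∀ n, A n) n = 0 :=
        Ultrafilter.mem_coe.mpr hz
      have hev : (fun n => ‖z n‖) =ᶠ[(ω : Filter ℕ)] (fun _ => (0:ℝ)) :=
        h1.mono fun n hn => by simp [hn]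
      have h0 : Filter.Tendsto (fun n => ‖z n‖) (ω : Filter ℕ) (nhds 0) :=
        (Filter.tendsto_congr' hev).mpr tendsto_const_nhds
      exact norm_eq_zero.mp (tendsto_nhds_unique (hnorm z) h0)
    have hz1 : π (star x * x - 1) = 0 := by
      apply key
      apply Filter.mem_of_superset hS
      intro n hn
      simp only [Set.mem_setOf_eq] at hn ⊢
      rw [coord1 x n, hxco n, (hrel n hn).1, sub_self]
    have hz2 : π (star y * y - 1) = 0 := by
      apply key
      apply Filter.mem_of_superset hS
      intro n hn
      simp only [Set.mem_setOf_eq] at hn ⊢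
      rw [coord1 y n, hyco n, (hrel n hn).2.1, sub_self]
    have hz3 : π ((x * star x) * (y * star y)) = 0 := by
      apply key
      apply Filter.mem_of_superset hS
      intro n hn
      simp only [Set.mem_setOf_eq] at hn ⊢
      rw [coord2 x y n, hxco n, hyco n]
      exact (hrel n hn).2.2
    refine ⟨π x, π y, ?_, ?_, ?_⟩
    · rwa [map_sub, map_mul, map_star, map_one, sub_eq_zero] at hz1
    · rwa [map_sub, map_mul, map_star, map_one, sub_eq_zero] at hz2
    · rwa [map_mul, map_mul, map_mul, map_star, map_star] at hz3
end

section
/- Let {Aₙ} be a sequence of unital C*-algebras, ω a free ultrafilter on ℕ, and k ≥ 1. Then Mₖ(∏_ω Aₙ) is properly infinite if and only if {n : Mₖ(Aₙ) is properly infinite} ∈ ω. -/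
set_option maxHeartbeats 2000000
set_option synthInstance.maxHeartbeats 1000000

open scoped ENNReal
open scoped NNReal

section SqrtLemma

variable {R : Type*} [NormedRing R] [StarRing R] [CompleteSpace R] [NormedSpace ℝ R]
  [StarModule ℝ R] [NormOneClass R] [IsScalarTower ℝ R R] [SMulCommClass ℝ R R]

/-- In a complete normed star ring with continuous star, a selfadjoint element `a` that is
close to `1` admits a selfadjoint element `c` with `c * a * c = 1` and `‖c‖ ≤ 2` (an abstract
inverse square root of `a`, obtained by a fixed-point argument). -/
theorem exists_selfAdjoint_conj_eq_one (hstar : Continuous (star : R → R))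
    (a : R) (ha : star a = a) (hnorm : ‖a - 1‖ ≤ 1/4) :
    ∃ c : R, star c = c ∧ c * a * c = 1 ∧ ‖c‖ ≤ 2 := by
  obtain ⟨x, rfl⟩ : ∃ x, a = 1 + x := ⟨a - 1, by abel⟩
  rw [add_sub_cancel_left] at hnorm
  have hxstar : star x = x := by
    have := ha
    rw [star_add, star_one] at this
    exact add_left_cancel this
  set S : Set R := ({z | ‖z‖ ≤ 1/2} ∩ {z | star z = z} ∩ {z | z * x = x * z}) ∩
      ⋂ w ∈ {w : R | w * x = x * w}, {z | w * z = z * w} with hSdef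
  have hmem : ∀ z : R, z ∈ S ↔ (‖z‖ ≤ 1/2 ∧ star z = z ∧ z * x = x * z ∧
      ∀ w : R, w * x = x * w → w * z = z * w) := by
    intro z
    simp only [hSdef, Set.mem_inter_iff, Set.mem_setOf_eq, Set.mem_iInter]
    tauto
  have hS_closed : IsClosed S := by
    refine (((isClosed_le continuous_norm continuous_const).inter
      (isClosed_eq hstar continuous_id)).inter
      (isClosed_eq (continuous_mul_right x) (continuous_mul_left x))).inter ?_
    exact isClosed_biInter fun w _ =>
      isClosed_eq (continuous_mul_left w) (continuous_mul_right w)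
  have h0 : (0 : R) ∈ S := (hmem 0).2 (by simp)
  haveI : Nonempty S := ⟨⟨0, h0⟩⟩
  haveI : CompleteSpace S := hS_closed.completeSpace_coe
  have hmaps : ∀ z : R, z ∈ S → (2⁻¹ : ℝ) • (x - z * z) ∈ S := by
    intro z hz
    obtain ⟨hz1, hz2, hz3, hz4⟩ := (hmem z).1 hz
    have hzz : z * z * x = x * (z * z) := by
      rw [mul_assoc, hz3, ← mul_assoc, hz3, mul_assoc]
    refine (hmem _).2 ⟨?_, ?_, ?_, ?_⟩
    · rw [norm_smul]
      have h1 : ‖x - z * z‖ ≤ 1/4 + 1/4 := by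
        refine (norm_sub_le _ _).trans (add_le_add hnorm ?_)
        calc ‖z * z‖ ≤ ‖z‖ * ‖z‖ := norm_mul_le _ _
          _ ≤ (1/2) * (1/2) :=
              mul_le_mul hz1 hz1 (norm_nonneg _) (by norm_num)
          _ = 1/4 := by norm_num
      have h2 : ‖(2⁻¹ : ℝ)‖ = 2⁻¹ := by simp
      rw [h2]
      nlinarith [norm_nonneg (x - z*z)]
    · rw [star_smul, star_trivial, star_sub, hxstar, star_mul, hz2]
    · rw [smul_mul_assoc, mul_smul_comm, sub_mul, mul_sub, hzz]
    · intro w hw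
      have hwz := hz4 w hw
      have hwzz : w * (z * z) = z * z * w := by
        rw [← mul_assoc, hwz, mul_assoc, hwz, mul_assoc]
      rw [mul_smul_comm, smul_mul_assoc, mul_sub, sub_mul, hw, hwzz]
  set G : S → S := fun z => ⟨(2⁻¹ : ℝ) • (x - (z : R) * (z : R)), hmaps z z.2⟩ with hG
  have hC : ContractingWith (2⁻¹ : ℝ≥0) G := by
    refine ⟨by exact_mod_cast (by norm_num : (2⁻¹:ℝ) < 1),
      LipschitzWith.of_dist_le_mul fun z z' => ?_⟩
    have hz1 : ‖(z : R)‖ ≤ 1/2 := ((hmem z).1 z.2).1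
    have hz'1 : ‖(z' : R)‖ ≤ 1/2 := ((hmem z').1 z'.2).1
    rw [Subtype.dist_eq, Subtype.dist_eq, dist_eq_norm, dist_eq_norm]
    have hval : (G z : R) - (G z' : R)
        = (2⁻¹ : ℝ) • ((z' : R) * (z' : R) - (z : R) * (z : R)) := by
      show (2⁻¹ : ℝ) • (x - (z : R) * (z : R)) - (2⁻¹ : ℝ) • (x - (z' : R) * (z' : R)) = _
      rw [← smul_sub]
      congr 1
      noncomm_ring
    have hid : (z' : R) * (z' : R) - (z : R) * (z : R)
        = (z' : R) * ((z' : R) - (z : R)) + ((z' : R) - (z : R)) * (z : R) := by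
      noncomm_ring
    rw [hval, norm_smul]
    have hkey : ‖(z' : R) * (z' : R) - (z : R) * (z : R)‖ ≤ 1 * ‖(z : R) - (z' : R)‖ := by
      rw [hid]
      have h1 : ‖(z' : R) * ((z' : R) - (z : R))‖ ≤ (1/2) * ‖(z : R) - (z' : R)‖ := by
        refine (norm_mul_le _ _).trans ?_
        rw [norm_sub_rev]
        exact mul_le_mul_of_nonneg_right hz'1 (norm_nonneg _)
      have h2 : ‖((z' : R) - (z : R)) * (z : R)‖ ≤ ‖(z : R) - (z' : R)‖ * (1/2) := by
        refine (norm_mul_le _ _).trans ?_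
        rw [norm_sub_rev]
        exact mul_le_mul_of_nonneg_left hz1 (norm_nonneg _)
      refine (norm_add_le _ _).trans ?_
      calc ‖(z' : R) * ((z' : R) - (z : R))‖ + ‖((z' : R) - (z : R)) * (z : R)‖
          ≤ (1/2) * ‖(z : R) - (z' : R)‖ + ‖(z : R) - (z' : R)‖ * (1/2) := add_le_add h1 h2
        _ = 1 * ‖(z : R) - (z' : R)‖ := by ring
    have h2 : ‖(2⁻¹ : ℝ)‖ = 2⁻¹ := by simp
    rw [h2]
    have := mul_le_mul_of_nonneg_left hkey (by norm_num : (0:ℝ) ≤ 2⁻¹)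
    refine this.trans (le_of_eq ?_)
    push_cast
    ring
  set z₀ := hC.fixedPoint G with hz₀
  have hfix : G z₀ = z₀ := hC.fixedPoint_isFixedPt
  set z : R := (z₀ : R) with hzdef
  have hzS := (hmem z).1 z₀.2
  have hfixval : (2⁻¹ : ℝ) • (x - z * z) = z := congrArg Subtype.val hfix
  have h2 : x - z * z = z + z := by
    have h := congrArg (fun y : R => (2 : ℝ) • y) hfixval
    simp only [smul_smul] at h
    rw [show (2 : ℝ) * 2⁻¹ = 1 by norm_num, one_smul, two_smul] at h
    exact h
  have hxz : x = z + z + z * z := by rw [← h2, sub_add_cancel]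
  set w : R := 1 + z with hw
  have hww : w * w = 1 + x := by
    have h3 : w * w = 1 + (z + z + z * z) := by rw [hw]; noncomm_ring
    rw [h3, ← hxz]
  have hwstar : star w = w := by rw [hw, star_add, star_one, hzS.2.1]
  have hzn : ‖-z‖ < 1 := by rw [norm_neg]; linarith [hzS.1]
  set u : Rˣ := Units.oneSub (-z) hzn with hu
  have huval : (u : R) = w := by
    show 1 - -z = w
    rw [sub_neg_eq_add, hw]
  set c : R := ((u⁻¹ : Rˣ) : R) with hc
  have hcw : c * w = 1 := by rw [← huval, hc, Units.inv_mul]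
  have hwc : w * c = 1 := by rw [← huval, hc, Units.mul_inv]
  have hcstar : star c = c := by
    have h1 : star c * w = 1 := by
      rw [← hwstar, ← star_mul, hwc, star_one]
    calc star c = star c * (w * c) := by rw [hwc, mul_one]
      _ = (star c * w) * c := by rw [mul_assoc]
      _ = c := by rw [h1, one_mul]
  refine ⟨c, hcstar, ?_, ?_⟩
  · have h3 : c * (1 + x) * c = (c * w) * (w * c) := by
      rw [← hww]; noncomm_ring
    rw [h3, hcw, hwc, one_mul]
  · have h1 : c = 1 - z * c := by
      have h4 : (1 + z) * c = 1 := by rw [← hw, hwc]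
      rw [add_mul, one_mul] at h4
      exact eq_sub_of_add_eq h4
    have h5 : ‖c‖ ≤ 1 + (1/2) * ‖c‖ := by
      calc ‖c‖ = ‖1 - z * c‖ := by rw [← h1]
        _ ≤ ‖(1 : R)‖ + ‖z * c‖ := norm_sub_le _ _
        _ = 1 + ‖z * c‖ := by rw [norm_one]
        _ ≤ 1 + ‖z‖ * ‖c‖ := by linarith [norm_mul_le z c]
        _ ≤ 1 + (1/2) * ‖c‖ := by
            have := mul_le_mul_of_nonneg_right hzS.1 (norm_nonneg c)
            linarith
    linarith

/-- From approximate isometries with approximately orthogonal ranges, one can construct exact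
isometries with exactly orthogonal ranges. -/
theorem exists_isometries_orthogonal_of_approx (hstar : Continuous (star : R → R))
    (s t : R) (h1 : ‖star s * s - 1‖ ≤ 1/4) (h2 : ‖star t * t - 1‖ ≤ 1/4)
    (h3 : ‖star s * t‖ ≤ 1/8) (h4 : ‖star t * s‖ ≤ 1/8) :
    ∃ s' t' : R, star s' * s' = 1 ∧ star t' * t' = 1 ∧ star s' * t' = 0 := by
  obtain ⟨cs, hcs_star, hcs_conj, hcs_norm⟩ := exists_selfAdjoint_conj_eq_one hstar
    (star s * s) (by rw [star_mul, star_star]) h1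
  obtain ⟨ct, hct_star, hct_conj, hct_norm⟩ := exists_selfAdjoint_conj_eq_one hstar
    (star t * t) (by rw [star_mul, star_star]) h2
  have key : ∀ (v c : R), star c = c → c * (star v * v) * c = 1 → star (v * c) * (v * c) = 1 := by
    intro v c hc h
    have h5 : star (v * c) * (v * c) = c * (star v * v) * c := by rw [star_mul, hc]; noncomm_ring
    rw [h5, h]
  obtain ⟨s₁, hs₁def⟩ : ∃ w : R, w = s * cs := ⟨_, rfl⟩
  obtain ⟨t₁, ht₁def⟩ : ∃ w : R, w = t * ct := ⟨_, rfl⟩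
  have hs₁ : star s₁ * s₁ = 1 := by rw [hs₁def]; exact key s cs hcs_star hcs_conj
  have ht₁ : star t₁ * t₁ = 1 := by rw [ht₁def]; exact key t ct hct_star hct_conj
  have hxval : star s₁ * t₁ = cs * (star s * t) * ct := by
    rw [hs₁def, ht₁def, star_mul, hcs_star]; noncomm_ring
  have hyval : star t₁ * s₁ = ct * (star t * s) * cs := by
    rw [hs₁def, ht₁def, star_mul, hct_star]; noncomm_ring
  have bound : ∀ (c c' w : R), ‖c‖ ≤ 2 → ‖c'‖ ≤ 2 → ‖w‖ ≤ 1/8 →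
      ‖c * w * c'‖ ≤ 1/2 := by
    intro c c' w hc hc' hw
    calc ‖c * w * c'‖ ≤ ‖c * w‖ * ‖c'‖ := norm_mul_le _ _
      _ ≤ ‖c‖ * ‖w‖ * ‖c'‖ :=
          mul_le_mul_of_nonneg_right (norm_mul_le _ _) (norm_nonneg _)
      _ ≤ 2 * (1/8) * 2 := by
          refine mul_le_mul ?_ hc' (norm_nonneg _) (by norm_num)
          exact mul_le_mul hc hw (norm_nonneg _) (by norm_num)
      _ = 1/2 := by norm_num
  have hxn : ‖star s₁ * t₁‖ ≤ 1/2 := by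
    rw [hxval]; exact bound _ _ _ hcs_norm hct_norm h3
  have hyn : ‖star t₁ * s₁‖ ≤ 1/2 := by
    rw [hyval]; exact bound _ _ _ hct_norm hcs_norm h4
  obtain ⟨x, hxdef⟩ : ∃ w : R, w = star s₁ * t₁ := ⟨_, rfl⟩
  obtain ⟨t₂, ht₂def⟩ : ∃ w : R, w = t₁ - s₁ * x := ⟨_, rfl⟩
  have hst₂ : star s₁ * t₂ = 0 := by
    rw [ht₂def, mul_sub, ← mul_assoc, hs₁, one_mul, ← hxdef, sub_self]
  have ha₂ : star t₂ * t₂ = 1 - (star t₁ * s₁) * x := by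
    have e1 : star t₂ = star t₁ - star x * star s₁ := by rw [ht₂def, star_sub, star_mul]
    calc star t₂ * t₂ = (star t₁ - star x * star s₁) * (t₁ - s₁ * x) := by rw [e1, ht₂def]
      _ = star t₁ * t₁ - (star t₁ * s₁) * x - star x * (star s₁ * t₁)
          + star x * ((star s₁ * s₁) * x) := by noncomm_ring
      _ = 1 - (star t₁ * s₁) * x - star x * x + star x * (1 * x) := by
          rw [ht₁, ← hxdef, hs₁]
      _ = 1 - (star t₁ * s₁) * x := by rw [one_mul]; abel
  have ha₂star : star (star t₂ * t₂) = star t₂ * t₂ := by rw [star_mul, star_star]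
  have ha₂norm : ‖star t₂ * t₂ - 1‖ ≤ 1/4 := by
    rw [ha₂]
    have e2 : (1 : R) - (star t₁ * s₁) * x - 1 = -((star t₁ * s₁) * x) := by abel
    rw [e2, norm_neg]
    calc ‖(star t₁ * s₁) * x‖ ≤ ‖star t₁ * s₁‖ * ‖x‖ := norm_mul_le _ _
      _ ≤ (1/2) * (1/2) := by
          rw [hxdef]
          exact mul_le_mul hyn hxn (norm_nonneg _) (by norm_num)
      _ = 1/4 := by norm_num
  obtain ⟨c₂, hc₂_star, hc₂_conj, _⟩ := exists_selfAdjoint_conj_eq_one hstar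
    (star t₂ * t₂) ha₂star ha₂norm
  exact ⟨s₁, t₂ * c₂, hs₁, key t₂ c₂ hc₂_star hc₂_conj,
    by rw [← mul_assoc, hst₂, zero_mul]⟩

end SqrtLemma

section MatrixAux

attribute [local instance] Matrix.linftyOpNormedRing Matrix.linftyOpNormedSpace

variable {k : ℕ} {A : Type*} [CStarAlgebra A]

theorem matrix_norm_entry_le (M : Matrix (Fin k) (Fin k) A) (i j : Fin k) : ‖M i j‖ ≤ ‖M‖ := by
  have h : ‖M i j‖₊ ≤ ‖M‖₊ := by
    rw [Matrix.linfty_opNNNorm_def]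
    exact le_trans (Finset.single_le_sum (f := fun j => ‖M i j‖₊) (fun _ _ => zero_le)
      (Finset.mem_univ j)) (Finset.le_sup (f := fun i => ∑ j, ‖M i j‖₊) (Finset.mem_univ i))
  exact_mod_cast h

theorem matrix_norm_le_sum (M : Matrix (Fin k) (Fin k) A) : ‖M‖ ≤ ∑ i, ∑ j, ‖M i j‖ := by
  have h : ‖M‖₊ ≤ ∑ i, ∑ j, ‖M i j‖₊ := by
    rw [Matrix.linfty_opNNNorm_def]
    exact Finset.sup_le fun i _ => Finset.single_le_sum (f := fun i => ∑ j, ‖M i j‖₊)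
      (fun _ _ => zero_le) (Finset.mem_univ i)
  calc ‖M‖ = ((‖M‖₊ : ℝ)) := rfl
    _ ≤ ((∑ i, ∑ j, ‖M i j‖₊ : ℝ≥0) : ℝ) := by exact_mod_cast h
    _ = ∑ i, ∑ j, ‖M i j‖ := by push_cast; rfl

theorem matrix_star_continuous :
    Continuous (star : Matrix (Fin k) (Fin k) A → Matrix (Fin k) (Fin k) A) := by
  have hb : ∀ M : Matrix (Fin k) (Fin k) A, ‖star M‖ ≤ (k * k : ℝ) * ‖M‖ := by
    intro M
    refine (matrix_norm_le_sum _).trans ?_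
    have he : ∀ i j : Fin k, ‖(star M) i j‖ = ‖M j i‖ := by
      intro i j
      rw [Matrix.star_apply, norm_star]
    calc ∑ i, ∑ j, ‖(star M) i j‖ ≤ ∑ _i : Fin k, ∑ _j : Fin k, ‖M‖ := by
          refine Finset.sum_le_sum fun i _ => Finset.sum_le_sum fun j _ => ?_
          rw [he i j]; exact matrix_norm_entry_le M j i
      _ = (k * k : ℝ) * ‖M‖ := by
          simp [Finset.sum_const, Finset.card_univ, mul_assoc]
  have hl : LipschitzWith ((k * k : ℕ) : ℝ≥0) (star : Matrix (Fin k) (Fin k) A → _) := by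
    refine LipschitzWith.of_dist_le_mul fun a b => ?_
    rw [dist_eq_norm, dist_eq_norm, ← star_sub]
    refine (hb _).trans (le_of_eq ?_)
    push_cast
    ring
  exact hl.continuous

/-- Entrywise approximate relations in a matrix algebra over a C⋆-algebra imply proper
infiniteness. -/
theorem matrix_isProperlyInfinite_of_entries [Nontrivial A] (hk : 0 < k)
    (s t : Matrix (Fin k) (Fin k) A)
    (h1 : ∀ i j, ‖(star s * s - 1) i j‖ ≤ 1/(8*(k:ℝ)^2))
    (h2 : ∀ i j, ‖(star t * t - 1) i j‖ ≤ 1/(8*(k:ℝ)^2))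
    (h3 : ∀ i j, ‖(star s * t) i j‖ ≤ 1/(8*(k:ℝ)^2))
    (h4 : ∀ i j, ‖(star t * s) i j‖ ≤ 1/(8*(k:ℝ)^2)) :
    IsProperlyInfinite (Matrix (Fin k) (Fin k) A) := by
  haveI : Nonempty (Fin k) := ⟨⟨0, hk⟩⟩
  haveI : NormOneClass (Matrix (Fin k) (Fin k) A) := ⟨by
    rw [← Matrix.diagonal_one, Matrix.linfty_opNorm_diagonal]
    exact norm_one⟩
  haveI : @CompleteSpace (Matrix (Fin k) (Fin k) A)
      PseudoMetricSpace.toUniformSpace :=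
    inferInstanceAs (CompleteSpace (Fin k → Fin k → A))
  have hbnd : ∀ M : Matrix (Fin k) (Fin k) A,
      (∀ i j, ‖M i j‖ ≤ 1/(8*(k:ℝ)^2)) → ‖M‖ ≤ 1/8 := by
    intro M hM
    refine (matrix_norm_le_sum M).trans ?_
    have hkne : (k : ℝ) ≠ 0 := by
      exact Nat.cast_ne_zero.mpr hk.ne'
    calc ∑ i, ∑ j, ‖M i j‖ ≤ ∑ _i : Fin k, ∑ _j : Fin k, 1/(8*(k:ℝ)^2) :=
          Finset.sum_le_sum fun i _ => Finset.sum_le_sum fun j _ => hM i j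
      _ = (k : ℝ) * ((k:ℝ) * (1/(8*(k:ℝ)^2))) := by
          simp [Finset.sum_const, Finset.card_univ, mul_assoc]
      _ = 1/8 := by field_simp
  obtain ⟨s', t', hs', ht', horth⟩ := exists_isometries_orthogonal_of_approx
    matrix_star_continuous s t
    ((hbnd _ h1).trans (by norm_num)) ((hbnd _ h2).trans (by norm_num))
    (hbnd _ h3) (hbnd _ h4)
  refine ⟨s', t', hs', ht', ?_⟩
  have h5 : (s' * star s') * (t' * star t') = s' * (star s' * t') * star t' := by
    noncomm_ring
  rw [h5, horth, mul_zero, zero_mul]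

end MatrixAux

theorem isometry_entry_norm_le_one {A : Type*} [CStarAlgebra A] [Nontrivial A] {k : ℕ}
    (s : Matrix (Fin k) (Fin k) A) (h : star s * s = 1) (i j : Fin k) : ‖s i j‖ ≤ 1 := by
  letI := CStarAlgebra.spectralOrder A
  letI := CStarAlgebra.spectralOrderedRing A
  have hsum : ∑ l, star (s l j) * (s l j) = 1 := by
    have h0 := congr_fun (congr_fun h j) j
    rwa [Matrix.mul_apply, Matrix.one_apply_eq] at h0
  have hle : star (s i j) * s i j ≤ 1 := by
    rw [← hsum]
    exact Finset.single_le_sum (f := fun l => star (s l j) * s l j)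
      (fun l _ => star_mul_self_nonneg (s l j)) (Finset.mem_univ i)
  have hn : ‖star (s i j) * s i j‖ ≤ ‖(1 : A)‖ :=
    CStarAlgebra.norm_le_norm_of_nonneg_of_le (star_mul_self_nonneg _) hle
  rw [CStarRing.norm_star_mul_self, norm_one] at hn
  nlinarith [norm_nonneg (s i j)]

section Plumbing

variable {A : ℕ → Type*} [∀ n, CStarAlgebra (A n)] [∀ n, Nontrivial (A n)]

/-- Evaluation at a coordinate, as a ring homomorphism on `lp A ∞`. -/
noncomputable def lpEval (n : ℕ) : lp A ∞ →+* A n where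
  toFun f := f n
  map_one' := congr_fun lp.infty_coeFn_one n
  map_mul' f g := congr_fun (lp.infty_coeFn_mul f g) n
  map_zero' := congr_fun (lp.coeFn_zero A ∞) n
  map_add' f g := congr_fun (lp.coeFn_add f g) n

theorem lpEval_star (n : ℕ) (f : lp A ∞) : lpEval n (star f) = star (lpEval (A := A) n f) :=
  congr_fun (lp.coeFn_star f) n

theorem mapMatrix_star {α β : Type*} [Ring α] [Ring β] [StarRing α] [StarRing β]
    {k : ℕ} (f : α →+* β) (hf : ∀ x, f (star x) = star (f x)) (M : Matrix (Fin k) (Fin k) α) :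
    f.mapMatrix (star M) = star (f.mapMatrix M) := by
  ext i j
  show f ((star M) i j) = star ((M.map f) j i)
  rw [Matrix.star_apply, Matrix.map_apply, hf]

end Plumbing

/-- Lemma 4.6.  The ultraproduct `∏_ω Aₙ` is modelled abstractly as a unital C*-algebra `B`
with a surjective unital `*`-homomorphism `π : lp A ∞ → B` satisfying `‖π x‖ = lim_ω ‖xₙ‖`.
For `k ≥ 1`, `Mₖ(∏_ω Aₙ)` is properly infinite iff `{n : Mₖ(Aₙ) properly infinite} ∈ ω`. -/
theorem ultraproduct_matrix_properlyInfinite_iff (A : ℕ → Type*) [∀ n, CStarAlgebra (A n)]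
    [∀ n, Nontrivial (A n)] (ω : Ultrafilter ℕ) (hfree : ∀ n : ℕ, {n} ∉ ω)
    (B : Type*) [CStarAlgebra B] (π : lp A ∞ →⋆ₐ[ℂ] B) (hsurj : Function.Surjective π)
    (hnorm : ∀ x : lp A ∞, Filter.Tendsto (fun n => ‖x n‖) (ω : Filter ℕ) (nhds ‖π x‖))
    (k : ℕ) (hk : 1 ≤ k) :
    IsProperlyInfinite (Matrix (Fin k) (Fin k) B) ↔
      {n : ℕ | IsProperlyInfinite (Matrix (Fin k) (Fin k) (A n))} ∈ ω := by
  classical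
  set πr : lp A ∞ →+* B := RingHomClass.toRingHom π with hπr
  have hπr_apply : ∀ x, πr x = π x := fun _ => rfl
  -- the entrywise matrix version of π
  set Pmap : Matrix (Fin k) (Fin k) (lp A ∞) →+* Matrix (Fin k) (Fin k) B := πr.mapMatrix with hPm
  have hPm_apply : ∀ (M : Matrix (Fin k) (Fin k) (lp A ∞)) i j, Pmap M i j = π (M i j) :=
    fun _ _ _ => rfl
  have hPm_star : ∀ M : Matrix (Fin k) (Fin k) (lp A ∞), Pmap (star M) = star (Pmap M) :=
    fun M => mapMatrix_star πr (fun x => map_star π x) M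
  -- entrywise coordinate maps
  have hcoord_apply : ∀ (n : ℕ) (M : Matrix (Fin k) (Fin k) (lp A ∞)) (i j : Fin k),
      (lpEval n).mapMatrix M i j = (M i j : ∀ m, A m) n := fun _ _ _ _ => rfl
  have hcoord_star : ∀ (n : ℕ) (M : Matrix (Fin k) (Fin k) (lp A ∞)),
      (lpEval n).mapMatrix (star M) = star ((lpEval n).mapMatrix M) :=
    fun n M => mapMatrix_star (lpEval n) (fun x => lpEval_star n x) M
  have hε : (0:ℝ) < 1/(8*(k:ℝ)^2) := by
    have : (0:ℝ) < (k:ℝ) := by exact_mod_cast hk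
    positivity
  constructor
  · rintro ⟨S, T, hS, hT, hST⟩
    -- orthogonality in the `star S * T = 0` form
    have hST' : star S * T = 0 := by
      calc star S * T = (star S * S) * (star S * T) * (star T * T) := by
            rw [hS, hT, one_mul, mul_one]
        _ = star S * ((S * star S) * (T * star T)) * T := by noncomm_ring
        _ = 0 := by rw [hST, mul_zero, zero_mul]
    have hTS' : star T * S = 0 := by
      have h6 := congrArg star hST'
      rwa [star_mul, star_star, star_zero] at h6
    -- lift entrywise
    set SL : Matrix (Fin k) (Fin k) (lp A ∞) :=
      Matrix.of fun i j => (hsurj (S i j)).choose with hSL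
    set TL : Matrix (Fin k) (Fin k) (lp A ∞) :=
      Matrix.of fun i j => (hsurj (T i j)).choose with hTL
    have hPmS : Pmap SL = S := by
      ext i j
      exact (hsurj (S i j)).choose_spec
    have hPmT : Pmap TL = T := by
      ext i j
      exact (hsurj (T i j)).choose_spec
    -- the four "error" matrices
    have hzero : ∀ (E : Matrix (Fin k) (Fin k) (lp A ∞)), Pmap E = 0 →
        ∀ᶠ n in (ω : Filter ℕ), ∀ i j, ‖(E i j : ∀ m, A m) n‖ ≤ 1/(8*(k:ℝ)^2) := by
      intro E hE
      rw [Filter.eventually_all]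
      intro i
      rw [Filter.eventually_all]
      intro j
      have h6 := hnorm (E i j)
      have h7 : π (E i j) = 0 := by
        rw [← hPm_apply E i j, hE]
        rfl
      rw [h7, norm_zero] at h6
      exact h6.eventually_le_const hε
    have hE1 : Pmap (star SL * SL - 1) = 0 := by
      rw [map_sub, map_mul, hPm_star, hPmS, map_one, hS, sub_self]
    have hE2 : Pmap (star TL * TL - 1) = 0 := by
      rw [map_sub, map_mul, hPm_star, hPmT, map_one, hT, sub_self]
    have hE3 : Pmap (star SL * TL) = 0 := by
      rw [map_mul, hPm_star, hPmS, hPmT, hST']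
    have hE4 : Pmap (star TL * SL) = 0 := by
      rw [map_mul, hPm_star, hPmT, hPmS, hTS']
    have hev := ((hzero _ hE1).and (hzero _ hE2)).and ((hzero _ hE3).and (hzero _ hE4))
    refine Filter.mem_of_superset hev ?_
    rintro n ⟨⟨h1, h2⟩, h3, h4⟩
    refine matrix_isProperlyInfinite_of_entries (Nat.lt_of_lt_of_le Nat.zero_lt_one hk)
      ((lpEval n).mapMatrix SL) ((lpEval n).mapMatrix TL) ?_ ?_ ?_ ?_
    · intro i j
      have he : star ((lpEval n).mapMatrix SL) * ((lpEval n).mapMatrix SL) - 1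
          = (lpEval n).mapMatrix (star SL * SL - 1) := by
        rw [map_sub, map_mul, hcoord_star, map_one]
      rw [he, hcoord_apply]
      exact h1 i j
    · intro i j
      have he : star ((lpEval n).mapMatrix TL) * ((lpEval n).mapMatrix TL) - 1
          = (lpEval n).mapMatrix (star TL * TL - 1) := by
        rw [map_sub, map_mul, hcoord_star, map_one]
      rw [he, hcoord_apply]
      exact h2 i j
    · intro i j
      have he : star ((lpEval n).mapMatrix SL) * ((lpEval n).mapMatrix TL)
          = (lpEval n).mapMatrix (star SL * TL) := by
        rw [map_mul, hcoord_star]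
      rw [he, hcoord_apply]
      exact h3 i j
    · intro i j
      have he : star ((lpEval n).mapMatrix TL) * ((lpEval n).mapMatrix SL)
          = (lpEval n).mapMatrix (star TL * SL) := by
        rw [map_mul, hcoord_star]
      rw [he, hcoord_apply]
      exact h4 i j
  · intro hW
    -- choose witnesses on the good set, `1` elsewhere
    set smat : ∀ n, Matrix (Fin k) (Fin k) (A n) := fun n =>
      if h : IsProperlyInfinite (Matrix (Fin k) (Fin k) (A n)) then h.choose else 1 with hsmat
    set tmat : ∀ n, Matrix (Fin k) (Fin k) (A n) := fun n =>
      if h : IsProperlyInfinite (Matrix (Fin k) (Fin k) (A n)) then h.choose_spec.choose else 1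
      with htmat
    have hrel : ∀ n, IsProperlyInfinite (Matrix (Fin k) (Fin k) (A n)) →
        star (smat n) * smat n = 1 ∧ star (tmat n) * tmat n = 1 ∧
          (smat n * star (smat n)) * (tmat n * star (tmat n)) = 0 := by
      intro n h
      rw [hsmat, htmat]
      simp only [dif_pos h]
      exact h.choose_spec.choose_spec
    have hsbdd : ∀ n i j, ‖smat n i j‖ ≤ 1 := by
      intro n i j
      rw [hsmat]
      by_cases h : IsProperlyInfinite (Matrix (Fin k) (Fin k) (A n))
      · simp only [dif_pos h]
        exact isometry_entry_norm_le_one h.choose h.choose_spec.choose_spec.1 i j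
      · simp only [dif_neg h, Matrix.one_apply]
        split_ifs
        · rw [norm_one]
        · rw [norm_zero]; norm_num
    have htbdd : ∀ n i j, ‖tmat n i j‖ ≤ 1 := by
      intro n i j
      rw [htmat]
      by_cases h : IsProperlyInfinite (Matrix (Fin k) (Fin k) (A n))
      · simp only [dif_pos h]
        exact isometry_entry_norm_le_one h.choose_spec.choose
          h.choose_spec.choose_spec.2.1 i j
      · simp only [dif_neg h, Matrix.one_apply]
        split_ifs
        · rw [norm_one]
        · rw [norm_zero]; norm_num
    have hmem : ∀ (f : ∀ n, Matrix (Fin k) (Fin k) (A n)), (∀ n i j, ‖f n i j‖ ≤ 1) →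
        ∀ i j, Memℓp (fun n => f n i j) ∞ := by
      intro f hf i j
      refine memℓp_infty ⟨1, ?_⟩
      rintro r ⟨n, rfl⟩
      exact hf n i j
    set SL : Matrix (Fin k) (Fin k) (lp A ∞) :=
      Matrix.of fun i j => (⟨fun n => smat n i j, hmem smat hsbdd i j⟩ : lp A ∞) with hSL
    set TL : Matrix (Fin k) (Fin k) (lp A ∞) :=
      Matrix.of fun i j => (⟨fun n => tmat n i j, hmem tmat htbdd i j⟩ : lp A ∞) with hTL
    have hSLcoord : ∀ n, (lpEval n).mapMatrix SL = smat n := fun n => rfl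
    have hTLcoord : ∀ n, (lpEval n).mapMatrix TL = tmat n := fun n => rfl
    -- a matrix over lp whose coordinates vanish on the ultrafilter set maps to zero under Π
    have hvanish : ∀ (E : Matrix (Fin k) (Fin k) (lp A ∞)),
        (∀ n ∈ {n : ℕ | IsProperlyInfinite (Matrix (Fin k) (Fin k) (A n))},
          (lpEval n).mapMatrix E = 0) → Pmap E = 0 := by
      intro E hE
      ext i j
      rw [hPm_apply, Matrix.zero_apply]
      have h6 := hnorm (E i j)
      have h7 : Filter.Tendsto (fun n => ‖(E i j : ∀ m, A m) n‖) (ω : Filter ℕ) (nhds 0) := by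
        refine Filter.Tendsto.congr' ?_ tendsto_const_nhds
        refine Filter.eventuallyEq_of_mem hW fun n hn => ?_
        have h8 : (E i j : ∀ m, A m) n = 0 := by
          rw [← hcoord_apply n E i j, hE n hn]
          rfl
        rw [h8, norm_zero]
      have h9 := tendsto_nhds_unique h6 h7
      exact norm_eq_zero.mp h9
    have hE1 : Pmap (star SL * SL - 1) = 0 := by
      refine hvanish _ fun n hn => ?_
      rw [map_sub, map_mul, hcoord_star, map_one, hSLcoord]
      rw [(hrel n hn).1, sub_self]
    have hE2 : Pmap (star TL * TL - 1) = 0 := by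
      refine hvanish _ fun n hn => ?_
      rw [map_sub, map_mul, hcoord_star, map_one, hTLcoord]
      rw [(hrel n hn).2.1, sub_self]
    have hE3 : Pmap ((SL * star SL) * (TL * star TL)) = 0 := by
      refine hvanish _ fun n hn => ?_
      rw [map_mul, map_mul, map_mul, hcoord_star, hcoord_star, hSLcoord, hTLcoord]
      exact (hrel n hn).2.2
    refine ⟨Pmap SL, Pmap TL, ?_, ?_, ?_⟩
    · have h6 : star (Pmap SL) * Pmap SL - 1 = 0 := by
        rw [← hPm_star, ← map_mul, ← map_one Pmap, ← map_sub]
        exact hE1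
      rwa [sub_eq_zero] at h6
    · have h6 : star (Pmap TL) * Pmap TL - 1 = 0 := by
        rw [← hPm_star, ← map_mul, ← map_one Pmap, ← map_sub]
        exact hE2
      rwa [sub_eq_zero] at h6
    · rw [← hPm_star, ← hPm_star, ← map_mul, ← map_mul, ← map_mul]
      exact hE3
end

section
/- Let A be a unital C*-algebra with no tracial state. Then for every state ρ on A and every δ > 0 there exists x ∈ A with ρ(x*x) = 1 and ρ(xx*) ≤ δ. -/
open scoped ComplexOrder

/-- A *state* on a unital C*-algebra: a positive linear functional with `φ 1 = 1`. -/
def IsState {A : Type*} [CStarAlgebra A] (φ : A →L[ℂ] ℂ) : Prop :=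
  φ 1 = 1 ∧ ∀ a : A, 0 ≤ φ (star a * a)

/-- A *tracial state*: a state `τ` with `τ(x*x) = τ(xx*)` for all `x`. -/
def IsTracialState {A : Type*} [CStarAlgebra A] (τ : A →L[ℂ] ℂ) : Prop :=
  IsState τ ∧ ∀ x : A, τ (star x * x) = τ (x * star x)

namespace PopProof

/-- The set of all sums `∑ⱼ xⱼ xⱼ*` over finite families with `∑ⱼ xⱼ* xⱼ = 1`. -/
def famSet (A : Type*) [CStarAlgebra A] : Set A :=
  {a | ∃ (ι : Type) (_ : Fintype ι) (x : ι → A),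
      ∑ j, star (x j) * x j = 1 ∧ ∑ j, x j * star (x j) = a}

variable {A : Type*} [CStarAlgebra A]

lemma one_mem_famSet : (1 : A) ∈ famSet A := by
  refine ⟨Unit, inferInstance, fun _ => 1, by simp, by simp⟩

section Order
variable [PartialOrder A] [StarOrderedRing A]

lemma one_nn : (0 : A) ≤ 1 := by
  simpa using star_mul_self_nonneg (1 : A)

lemma smul_le_smul_left' {p : ℝ} (hp : 0 ≤ p) {a b : A} (h : a ≤ b) : p • a ≤ p • b := by
  have := smul_nonneg hp (sub_nonneg.2 h)
  rwa [smul_sub, sub_nonneg] at this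

lemma smul_one_le {s t : ℝ} (h : s ≤ t) : s • (1 : A) ≤ t • 1 := by
  have := smul_nonneg (sub_nonneg.2 h) (one_nn (A := A))
  rwa [sub_smul, sub_nonneg] at this

lemma sa_le_smul_one {c : A} (hc : IsSelfAdjoint c) : c ≤ ‖c‖ • 1 := by
  simpa [Algebra.algebraMap_eq_smul_one] using IsSelfAdjoint.le_algebraMap_norm_self hc

lemma nonneg_of_mem_famSet {a : A} (ha : a ∈ famSet A) : 0 ≤ a := by
  obtain ⟨ι, hι, x, -, rfl⟩ := ha
  exact Finset.sum_nonneg fun j _ => mul_star_self_nonneg (x j)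

lemma convex_famSet : Convex ℝ (famSet A) := by
  rintro a ⟨ι, hι, x, hx1, rfl⟩ b ⟨κ, hκ, y, hy1, rfl⟩ p q hp hq hpq
  refine ⟨ι ⊕ κ, inferInstance,
    Sum.elim (fun j => Real.sqrt p • x j) (fun k => Real.sqrt q • y k), ?_, ?_⟩
  · rw [Fintype.sum_sum_type]
    have h1 : ∀ j, star (Real.sqrt p • x j) * (Real.sqrt p • x j)
        = p • (star (x j) * x j) := fun j => by
      rw [star_smul, star_trivial, smul_mul_smul_comm, Real.mul_self_sqrt hp]
    have h2 : ∀ k, star (Real.sqrt q • y k) * (Real.sqrt q • y k)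
        = q • (star (y k) * y k) := fun k => by
      rw [star_smul, star_trivial, smul_mul_smul_comm, Real.mul_self_sqrt hq]
    simp only [Sum.elim_inl, Sum.elim_inr, h1, h2, ← Finset.smul_sum, hx1, hy1]
    rw [← add_smul, hpq, one_smul]
  · rw [Fintype.sum_sum_type]
    have h1 : ∀ j, (Real.sqrt p • x j) * star (Real.sqrt p • x j)
        = p • (x j * star (x j)) := fun j => by
      rw [star_smul, star_trivial, smul_mul_smul_comm, Real.mul_self_sqrt hp]
    have h2 : ∀ k, (Real.sqrt q • y k) * star (Real.sqrt q • y k)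
        = q • (y k * star (y k)) := fun k => by
      rw [star_smul, star_trivial, smul_mul_smul_comm, Real.mul_self_sqrt hq]
    simp only [Sum.elim_inl, Sum.elim_inr, h1, h2, ← Finset.smul_sum]


lemma exists_mul_famSet {a b : A} (ha : a ∈ famSet A) (hb : b ∈ famSet A) :
    ∃ c ∈ famSet A, ‖c‖ ≤ ‖a‖ * ‖b‖ := by
  obtain ⟨ι, hι, x, hx1, hx2⟩ := ha
  obtain ⟨κ, hκ, y, hy1, hy2⟩ := hb
  have ha0 : (0:A) ≤ a := by
    rw [← hx2]; exact Finset.sum_nonneg fun j _ => mul_star_self_nonneg (x j)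
  set z : κ × ι → A := fun p => y p.1 * x p.2 with hz
  have hsum1 : ∑ p : κ × ι, star (z p) * z p = 1 := by
    rw [Fintype.sum_prod_type, Finset.sum_comm]
    have : ∀ j, ∑ k, star (z (k, j)) * z (k, j) = star (x j) * x j := by
      intro j
      have : ∀ k, star (z (k, j)) * z (k, j)
          = star (x j) * (star (y k) * y k) * x j := fun k => by
        simp only [hz, star_mul, mul_assoc]
      simp only [this, ← Finset.sum_mul, ← Finset.mul_sum, hy1, mul_one]
    simp only [this, hx1]
  set c : A := ∑ p : κ × ι, z p * star (z p) with hc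
  have hcmem : c ∈ famSet A := ⟨κ × ι, inferInstance, z, hsum1, rfl⟩
  refine ⟨c, hcmem, ?_⟩
  have hc0 : (0:A) ≤ c := nonneg_of_mem_famSet hcmem
  have hkey : c ≤ ‖a‖ • b := by
    have hcalt : c = ∑ k, y k * a * star (y k) := by
      rw [hc, Fintype.sum_prod_type]
      congr 1; ext k
      have : ∀ j, z (k, j) * star (z (k, j))
          = y k * (x j * star (x j)) * star (y k) := fun j => by
        simp only [hz, star_mul, mul_assoc]
      simp only [this, ← Finset.sum_mul, ← Finset.mul_sum, hx2]
    have hb2 : ∑ k, y k * (‖a‖ • (1:A)) * star (y k) = ‖a‖ • b := by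
      rw [← hy2, Finset.smul_sum]
      congr 1; ext k
      rw [mul_smul_comm, smul_mul_assoc, mul_one]
    rw [hcalt, ← hb2]
    refine Finset.sum_le_sum fun k _ => ?_
    exact star_right_conjugate_le_conjugate (sa_le_smul_one (IsSelfAdjoint.of_nonneg ha0)) (y k)
  calc ‖c‖ ≤ ‖‖a‖ • b‖ := CStarAlgebra.norm_le_norm_of_nonneg_of_le hc0 hkey
    _ = ‖a‖ * ‖b‖ := by rw [norm_smul, Real.norm_eq_abs, abs_of_nonneg (norm_nonneg a)]

lemma one_le_norm_of_no_small {δ : ℝ} (hδ : 0 < δ) (h : ∀ a ∈ famSet A, δ < ‖a‖) :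
    ∀ a ∈ famSet A, 1 ≤ ‖a‖ := by
  intro a ha
  by_contra hlt
  push_neg at hlt
  have hpow : ∀ k : ℕ, ∃ c ∈ famSet A, ‖c‖ ≤ ‖a‖ ^ (k + 1) := by
    intro k
    induction k with
    | zero => exact ⟨a, ha, by simp⟩
    | succ n ih =>
      obtain ⟨c, hc, hcn⟩ := ih
      obtain ⟨c', hc', hle⟩ := exists_mul_famSet ha hc
      refine ⟨c', hc', hle.trans ?_⟩
      calc ‖a‖ * ‖c‖ ≤ ‖a‖ * ‖a‖ ^ (n + 1) :=
            mul_le_mul_of_nonneg_left hcn (norm_nonneg a)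
        _ = ‖a‖ ^ (n + 2) := by ring
  obtain ⟨n, hn⟩ := exists_pow_lt_of_lt_one hδ hlt
  obtain ⟨c, hc, hcle⟩ := hpow n
  have : ‖a‖ ^ (n + 1) ≤ ‖a‖ ^ n :=
    pow_le_pow_of_le_one (norm_nonneg a) hlt.le (Nat.le_succ n)
  exact absurd (h c hc) (not_lt.2 (hcle.trans (this.trans hn.le)))


variable {ρ : A →L[ℂ] ℂ} (hρ : IsState ρ)
include hρ

lemma state_nonneg {a : A} (ha : 0 ≤ a) : 0 ≤ ρ a := by
  have h1 : CFC.sqrt a * CFC.sqrt a = a := CFC.sqrt_mul_sqrt_self a ha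
  have h2 : IsSelfAdjoint (CFC.sqrt a) := IsSelfAdjoint.of_nonneg (CFC.sqrt_nonneg _)
  have := hρ.2 (CFC.sqrt a)
  rwa [h2.star_eq, h1] at this

lemma state_real {a : A} (ha : 0 ≤ a) : ρ a = ((ρ a).re : ℂ) := by
  have := state_nonneg hρ ha
  rw [Complex.le_def] at this
  exact Complex.ext (by simp) (by simp [← this.2])

lemma state_mono {a b : A} (hab : a ≤ b) : ρ a ≤ ρ b := by
  have := state_nonneg hρ (sub_nonneg.2 hab)
  rwa [map_sub, sub_nonneg] at this

lemma state_le_norm {a : A} (ha : 0 ≤ a) : ρ a ≤ (‖a‖ : ℂ) := by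
  have h1 : ρ a ≤ ρ (‖a‖ • (1:A)) := state_mono hρ (sa_le_smul_one (IsSelfAdjoint.of_nonneg ha))
  rwa [ρ.map_smul_of_tower, hρ.1, Complex.real_smul, mul_one] at h1

lemma main_of_small {δ : ℝ} {a : A} (ha : a ∈ famSet A) (hnorm : ‖a‖ ≤ δ) :
    ∃ x : A, ρ (star x * x) = 1 ∧ ρ (x * star x) ≤ (δ : ℂ) := by
  obtain ⟨ι, hι, x, hsum1, hsum2⟩ := ha
  set t : ι → ℝ := fun j => (ρ (star (x j) * x j)).re with ht
  set s : ι → ℝ := fun j => (ρ (x j * star (x j))).re with hs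
  have ht0 : ∀ j, 0 ≤ t j := fun j => by
    have := hρ.2 (x j); rw [Complex.le_def] at this; simpa using this.1
  have hs0 : ∀ j, 0 ≤ s j := fun j => by
    have := hρ.2 (star (x j)); rw [star_star, Complex.le_def] at this; simpa using this.1
  have hρt : ∀ j, ρ (star (x j) * x j) = (t j : ℂ) := fun j =>
    state_real hρ (star_mul_self_nonneg (x j))
  have hρs : ∀ j, ρ (x j * star (x j)) = (s j : ℂ) := fun j =>
    state_real hρ (mul_star_self_nonneg (x j))
  have hsum_t : ∑ j, t j = 1 := by
    have h1 : ∑ j, ρ (star (x j) * x j) = 1 := by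
      rw [← map_sum, hsum1, hρ.1]
    rw [Finset.sum_congr rfl fun j _ => hρt j] at h1
    exact_mod_cast h1
  have hsum_s : ∑ j, s j ≤ δ := by
    have ha0 : (0:A) ≤ a := by
      rw [← hsum2]; exact Finset.sum_nonneg fun j _ => mul_star_self_nonneg (x j)
    have h1 : ∑ j, ρ (x j * star (x j)) = ρ a := by rw [← map_sum, hsum2]
    rw [Finset.sum_congr rfl fun j _ => hρs j] at h1
    have h2 : ρ a ≤ (δ : ℂ) := (state_le_norm hρ ha0).trans (by exact_mod_cast hnorm)
    rw [← h1] at h2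
    exact_mod_cast h2
  have hJne : ∃ j, 0 < t j := by
    by_contra hc
    push_neg at hc
    have : ∑ j, t j = 0 :=
      Finset.sum_eq_zero fun j _ => le_antisymm (hc j) (ht0 j)
    rw [hsum_t] at this; norm_num at this
  set J : Finset ι := Finset.univ.filter (fun j => 0 < t j) with hJ
  have hJne' : J.Nonempty := by
    obtain ⟨j, hj⟩ := hJne
    exact ⟨j, by simp [hJ, hj]⟩
  obtain ⟨j, hjJ, hjmin⟩ := J.exists_min_image (fun j => s j / t j) hJne'
  have htj : 0 < t j := by simpa [hJ] using hjJ
  set m : ℝ := s j / t j with hm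
  have hm0 : 0 ≤ m := div_nonneg (hs0 j) (ht0 j)
  have hmδ : m ≤ δ := by
    have hkey : ∀ k, m * t k ≤ s k := by
      intro k
      by_cases hk : 0 < t k
      · have := hjmin k (by simp [hJ, hk])
        rwa [← le_div_iff₀ hk]
      · have : t k = 0 := le_antisymm (not_lt.1 hk) (ht0 k)
        simp [this, hs0 k]
    calc m = m * ∑ k, t k := by rw [hsum_t, mul_one]
      _ = ∑ k, m * t k := Finset.mul_sum _ _ _
      _ ≤ ∑ k, s k := Finset.sum_le_sum fun k _ => hkey k
      _ ≤ δ := hsum_s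
  refine ⟨(Real.sqrt (t j))⁻¹ • x j, ?_, ?_⟩
  · rw [star_smul, star_trivial, smul_mul_smul_comm, ← Real.sqrt_inv,
      Real.mul_self_sqrt (by positivity), ρ.map_smul_of_tower, hρt j,
      Complex.real_smul]
    rw [← Complex.ofReal_mul, inv_mul_cancel₀ htj.ne', Complex.ofReal_one]
  · rw [star_smul, star_trivial, smul_mul_smul_comm, ← Real.sqrt_inv,
      Real.mul_self_sqrt (by positivity), ρ.map_smul_of_tower, hρs j,
      Complex.real_smul, ← Complex.ofReal_mul]
    have : (t j)⁻¹ * s j = m := by rw [hm, div_eq_inv_mul]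
    rw [this]
    exact_mod_cast hmδ


omit hρ

lemma real_star_smul (c : ℝ) (v : A) : star (c • v) = c • star v := by
  rw [star_smul, star_trivial]

lemma exists_tracial (h : ∀ a ∈ famSet A, 1 ≤ ‖a‖) :
    ∃ τ : A →L[ℂ] ℂ, IsTracialState τ := by
  classical
  set U : Set A := {a | ∃ r : ℝ, r < 2 ∧ a + star a ≤ r • 1} with hU
  -- U is open
  have hUopen : IsOpen U := by
    rw [Metric.isOpen_iff]
    rintro a ⟨r, hr2, hle⟩
    refine ⟨(2 - r) / 4, by linarith, ?_⟩
    intro b hb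
    rw [Metric.mem_ball, dist_eq_norm] at hb
    set d := b - a with hd
    have hsa : IsSelfAdjoint (d + star d) := by
      rw [IsSelfAdjoint, star_add, star_star, add_comm]
    have hnorm : ‖d + star d‖ ≤ 2 * ‖d‖ := by
      calc ‖d + star d‖ ≤ ‖d‖ + ‖star d‖ := norm_add_le _ _
        _ = 2 * ‖d‖ := by rw [norm_star]; ring
    have hdle : d + star d ≤ (2 * ‖d‖) • 1 :=
      (sa_le_smul_one hsa).trans (smul_one_le hnorm)
    refine ⟨r + 2 * ‖d‖, by linarith, ?_⟩
    have hbd : b + star b = (a + star a) + (d + star d) := by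
      rw [hd, star_sub]; abel
    rw [hbd, add_smul]
    exact add_le_add hle hdle
  -- U is convex
  have hUconvex : Convex ℝ U := by
    rintro a ⟨r, hr2, hra⟩ b ⟨r', hr2', hrb⟩ p q hp hq hpq
    refine ⟨p * r + q * r', by simpa using (convex_Iio (2:ℝ)) hr2 hr2' hp hq hpq, ?_⟩
    have h1 : (p • a + q • b) + star (p • a + q • b)
        = p • (a + star a) + q • (b + star b) := by
      rw [star_add, real_star_smul, real_star_smul]
      module
    rw [h1, add_smul, mul_smul, mul_smul]
    exact add_le_add (smul_le_smul_left' hp hra) (smul_le_smul_left' hq hrb)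
  -- U and famSet are disjoint
  have hdisj : Disjoint U (famSet A) := by
    rw [Set.disjoint_left]
    rintro a ⟨r, hr2, hle⟩ hmem
    have ha0 : (0:A) ≤ a := nonneg_of_mem_famSet hmem
    have ha1 : 1 ≤ ‖a‖ := h a hmem
    have hasa : star a = a := (IsSelfAdjoint.of_nonneg ha0).star_eq
    rw [hasa] at hle
    have hhalf : a ≤ (r / 2) • 1 := by
      have := smul_le_smul_left' (p := (1:ℝ)/2) (by norm_num) hle
      rw [smul_add] at this
      have h2 : (1/2 : ℝ) • a + (1/2 : ℝ) • a = a := by module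
      rw [h2, smul_smul] at this
      convert this using 2
      ring
    have hr'lt : max (r / 2) 0 < 1 := max_lt (by linarith) one_pos
    have hle' : a ≤ algebraMap ℝ A (max (r / 2) 0) := by
      rw [Algebra.algebraMap_eq_smul_one]
      exact hhalf.trans (smul_one_le (le_max_left _ _))
    have := (CStarAlgebra.norm_le_iff_le_algebraMap a (le_max_right _ _) ha0).2 hle'
    linarith
  obtain ⟨f, u, hfU, hfC⟩ :=
    geometric_hahn_banach_open hUconvex hUopen convex_famSet hdisj
  -- basic facts about f and u
  have hu0 : 0 < u := by
    have h0U : (0:A) ∈ U := ⟨1, by norm_num, by simpa using (one_nn (A := A))⟩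
    have := hfU 0 h0U
    rwa [map_zero] at this
  have hone : ((1:ℝ) • (1:A)) = 1 := one_smul ℝ (1:A)
  have hf_nonneg : ∀ a : A, 0 ≤ a → 0 ≤ f a := by
    intro a ha
    by_contra hneg
    push_neg at hneg
    set t : ℝ := (u + 1) / (-f a) with htdef
    have ht0 : 0 < t := div_pos (by linarith) (by linarith)
    have hmem : (-t) • a ∈ U := by
      refine ⟨1, by norm_num, ?_⟩
      rw [real_star_smul, (IsSelfAdjoint.of_nonneg ha).star_eq]
      have h1 : (-t) • a + (-t) • a = -((2*t) • a) := by module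
      rw [h1]
      have h3 : -((2*t) • a) ≤ 0 := neg_nonpos.2 (smul_nonneg (by linarith) ha)
      exact h3.trans ((one_nn (A := A)).trans_eq hone.symm)
    have := hfU _ hmem
    rw [map_smul, smul_eq_mul] at this
    have heq : -t * f a = u + 1 := by
      have hne : -f a ≠ 0 := by linarith
      rw [htdef, neg_mul_comm, div_mul_cancel₀ _ hne]
    rw [heq] at this; linarith
  have hfI : ∀ a : A, IsSelfAdjoint a → f (Complex.I • a) = 0 := by
    intro a ha
    have hmem : ∀ t : ℝ, t • (Complex.I • a) ∈ U := by
      intro t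
      refine ⟨1, by norm_num, ?_⟩
      have hsa : star (Complex.I • a) = -(Complex.I • a) := by
        rw [star_smul, Complex.star_def, Complex.conj_I, ha.star_eq, neg_smul]
      have h1 : t • Complex.I • a + star (t • Complex.I • a) = 0 := by
        rw [real_star_smul, hsa]
        module
      rw [h1]
      exact (one_nn (A := A)).trans_eq hone.symm
    by_contra hne
    have key : ∀ t : ℝ, t * f (Complex.I • a) < u := fun t => by
      have := hfU _ (hmem t)
      rwa [map_smul, smul_eq_mul] at this
    rcases lt_or_gt_of_ne hne with hlt | hgt
    · have := key ((u + 1) / f (Complex.I • a))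
      rw [div_mul_cancel₀ _ (by linarith)] at this
      linarith
    · have := key ((u + 1) / f (Complex.I • a))
      rw [div_mul_cancel₀ _ (by linarith)] at this
      linarith
  have hge : u ≤ f 1 := hfC 1 one_mem_famSet
  have hf1 : f 1 = u := by
    refine le_antisymm ?_ hge
    by_contra hlt
    push_neg at hlt
    have hf1pos : 0 < f 1 := hu0.trans hlt
    set t : ℝ := (u + f 1) / (2 * f 1) with htdef
    have ht1 : t < 1 := by
      rw [htdef, div_lt_one (by linarith)]; linarith
    have hmem : t • (1:A) ∈ U := by
      refine ⟨2 * t, by linarith, ?_⟩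
      rw [real_star_smul, star_one]
      have : t • (1:A) + t • 1 = (2*t) • 1 := by module
      rw [this]
    have := hfU _ hmem
    rw [map_smul, smul_eq_mul] at this
    have : (u + f 1) / 2 < u := by
      rw [htdef] at this
      have heq : (u + f 1) / (2 * f 1) * f 1 = (u + f 1) / 2 := by
        field_simp
      linarith [heq ▸ this]
    linarith
  -- the trace inequality
  have trace_le : ∀ x : A, f (star x * x) ≤ f (x * star x) := by
    have contr : ∀ x : A, ‖x‖ ≤ 1 → f (star x * x) ≤ f (x * star x) := by
      intro x hx
      have hsax : IsSelfAdjoint (star x * x) := IsSelfAdjoint.star_mul_self x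
      have hxx1 : star x * x ≤ 1 := by
        refine (sa_le_smul_one hsax).trans ?_
        rw [CStarRing.norm_star_mul_self]
        exact (smul_one_le (by nlinarith [norm_nonneg x])).trans_eq hone
      have hy0 : (0:A) ≤ 1 - star x * x := sub_nonneg.2 hxx1
      set y : A := CFC.sqrt (1 - star x * x) with hy
      have hysa : IsSelfAdjoint y := IsSelfAdjoint.of_nonneg (CFC.sqrt_nonneg _)
      have hyy : y * y = 1 - star x * x := CFC.sqrt_mul_sqrt_self _ hy0
      have hmem : x * star x + (1 - star x * x) ∈ famSet A := by
        refine ⟨Bool, inferInstance, fun b => cond b x y, ?_, ?_⟩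
        · rw [Fintype.sum_bool]
          show star x * x + star y * y = 1
          rw [hysa.star_eq, hyy]
          abel
        · rw [Fintype.sum_bool]
          show x * star x + y * star y = _
          rw [hysa.star_eq, hyy]
      have := hfC _ hmem
      rw [map_add, map_sub, hf1] at this
      linarith
    intro x
    rcases eq_or_ne x 0 with rfl | hx0
    · simp
    · have hnx : 0 < ‖x‖ := norm_pos_iff.2 hx0
      have h1 : ‖(‖x‖⁻¹ • x)‖ ≤ 1 := by
        rw [norm_smul, norm_inv, norm_norm, inv_mul_cancel₀ hnx.ne']
      have := contr _ h1
      rw [real_star_smul, smul_mul_smul_comm, smul_mul_smul_comm,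
        map_smul, map_smul, smul_eq_mul, smul_eq_mul] at this
      have hpos : 0 < ‖x‖⁻¹ * ‖x‖⁻¹ := by positivity
      exact (mul_le_mul_iff_right₀ hpos).1 this
  have trace_eq : ∀ x : A, f (star x * x) = f (x * star x) := by
    intro x
    refine le_antisymm (trace_le x) ?_
    have := trace_le (star x)
    rwa [star_star] at this
  -- build the tracial state
  refine ⟨u⁻¹ • f.extendTo𝕜', ?_⟩
  have happly : ∀ a : A, (u⁻¹ • f.extendTo𝕜') a
      = u⁻¹ • ((f a : ℂ) - Complex.I * (f (Complex.I • a) : ℂ)) := by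
    intro a
    rfl
  have hsaval : ∀ a : A, IsSelfAdjoint a → (u⁻¹ • f.extendTo𝕜') a = ((u⁻¹ * f a : ℝ) : ℂ) := by
    intro a ha
    rw [happly, hfI a ha, Complex.ofReal_zero, mul_zero, sub_zero,
      Complex.real_smul, Complex.ofReal_mul]
  refine ⟨⟨?_, ?_⟩, ?_⟩
  · rw [hsaval 1 (IsSelfAdjoint.one (R := A)), hf1, inv_mul_cancel₀ hu0.ne', Complex.ofReal_one]
  · intro a
    rw [hsaval _ (IsSelfAdjoint.star_mul_self a)]
    have : 0 ≤ u⁻¹ * f (star a * a) :=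
      mul_nonneg (inv_nonneg.2 hu0.le) (hf_nonneg _ (star_mul_self_nonneg a))
    exact_mod_cast this
  · intro x
    rw [hsaval _ (IsSelfAdjoint.star_mul_self x), hsaval _ (IsSelfAdjoint.mul_star_self x),
      trace_eq x]
end Order
end PopProof

/-- Corollary 2.8: if a unital C*-algebra has no tracial state, then for every state `ρ`
and every `δ > 0` there is `x` with `ρ(x*x) = 1` and `ρ(xx*) ≤ δ`. -/
theorem exists_antitracial_element_of_no_tracialState {A : Type*} [CStarAlgebra A]
    (htraceless : ¬ ∃ τ : A →L[ℂ] ℂ, IsTracialState τ)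
    (ρ : A →L[ℂ] ℂ) (hρ : IsState ρ) (δ : ℝ) (hδ : 0 < δ) :
    ∃ x : A, ρ (star x * x) = 1 ∧ ρ (x * star x) ≤ (δ : ℂ) := by
  letI : PartialOrder A := CStarAlgebra.spectralOrder A
  letI : StarOrderedRing A := CStarAlgebra.spectralOrderedRing A
  by_cases h : ∃ a ∈ PopProof.famSet A, ‖a‖ ≤ δ
  · obtain ⟨a, ha, hle⟩ := h
    exact PopProof.main_of_small hρ ha hle
  · push_neg at h
    exact absurd (PopProof.exists_tracial (PopProof.one_le_norm_of_no_small hδ h)) htraceless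
end

section
/- Let A be a unital C*-algebra containing two isometries s₁, s₂ whose range projections p₁ = s₁s₁*, p₂ = s₂s₂* satisfy ‖p₁p₂‖ < 1. Then there is a unitary u ∈ A with u p₁ u* ≤ 1 − p₂; consequently A contains two isometries with exactly orthogonal range projections. -/
section Aux

variable {A : Type*} [CStarAlgebra A]

private lemma idem_l {M : Type*} [Semigroup M] {p : M} (h : p * p = p) (x : M) :
    p * (p * x) = p * x := by rw [← mul_assoc, h]

open Polynomial in
lemma commute_cfc_of_commute_s19 {x a : A} (hxa : Commute x a) (f : ℝ → ℝ) :
    Commute x (cfc f a) := by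
  refine cfc_cases (fun y => Commute x y) a f (Commute.zero_right x) fun hf ha' => ?_
  suffices H : ∀ g : C(spectrum ℝ a, ℝ), Commute x (cfcHom ha' g) from H _
  intro g
  let S : Subalgebra ℝ C(spectrum ℝ a, ℝ) :=
  { carrier := {g | Commute x (cfcHom ha' g)}
    mul_mem' := fun {g1 g2} hg hh => show Commute x (cfcHom ha' (g1 * g2)) by
      rw [map_mul]
      exact Commute.mul_right hg hh
    add_mem' := fun {g1 g2} hg hh => show Commute x (cfcHom ha' (g1 + g2)) by
      rw [map_add]
      exact Commute.add_right hg hh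
    algebraMap_mem' := fun r => show Commute x (cfcHom ha' (algebraMap ℝ _ r)) by
      rw [AlgHomClass.commutes, Algebra.algebraMap_eq_smul_one]
      exact (Commute.one_right x).smul_right r }
  have hS_closed : IsClosed (S : Set C(spectrum ℝ a, ℝ)) := by
    have h1 : IsClosed {y : A | Commute x y} :=
      isClosed_eq (continuous_const.mul continuous_id) (continuous_id.mul continuous_const)
    exact h1.preimage (cfcHom_isClosedEmbedding ha').continuous
  have hle : polynomialFunctions (spectrum ℝ a) ≤ S := by
    rw [polynomialFunctions.eq_adjoin_X]
    apply Algebra.adjoin_le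
    rw [Set.singleton_subset_iff]
    show Commute x (cfcHom ha' (toContinuousMapOnAlgHom (spectrum ℝ a) X))
    have hX : (toContinuousMapOnAlgHom (spectrum ℝ a) X)
        = (ContinuousMap.id ℝ).restrict (spectrum ℝ a) := by
      ext z; simp
    rw [hX, cfcHom_id ha']
    exact hxa
  have htop := polynomialFunctions.topologicalClosure (spectrum ℝ a)
  have hg : g ∈ (polynomialFunctions (spectrum ℝ a)).topologicalClosure := by
    rw [htop]; trivial
  exact Subalgebra.topologicalClosure_minimal hle hS_closed hg

/-- Existence of a self-adjoint `d` with `d * d = (1 - a)⁻¹`, commuting with everything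
commuting with `a`, provided `a` is self-adjoint with spectrum below `1`. -/
lemma exists_inv_sqrt_one_sub {a : A} (ha : IsSelfAdjoint a)
    (hs : ∀ x ∈ spectrum ℝ a, x < 1) :
    ∃ d : A, IsSelfAdjoint d ∧ (∀ x : A, Commute x a → Commute x d) ∧
      d * d * (1 - a) = 1 ∧ (1 - a) * (d * d) = 1 := by
  set f : ℝ → ℝ := fun x => Real.sqrt (1 - x)⁻¹ with hf_def
  have hf : ContinuousOn f (spectrum ℝ a) := by
    apply Real.continuous_sqrt.comp_continuousOn
    apply ContinuousOn.inv₀ ((continuous_const.sub continuous_id).continuousOn)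
    intro x hx
    have := hs x hx
    intro h
    simp only [Pi.sub_apply, id] at h
    linarith [sub_eq_zero.mp h]
  have hinvc : ContinuousOn (fun x : ℝ => (1 - x)⁻¹) (spectrum ℝ a) := by
    apply ContinuousOn.inv₀ ((continuous_const.sub continuous_id).continuousOn)
    intro x hx h
    simp only [Pi.sub_apply, id] at h
    linarith [sub_eq_zero.mp h, hs x hx]
  have hsubc : ContinuousOn (fun x : ℝ => 1 - x) (spectrum ℝ a) :=
    (continuous_const.sub continuous_id).continuousOn
  have h1a : cfc (fun x : ℝ => 1 - x) a = 1 - a := by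
    have := cfc_sub (fun _ : ℝ => (1:ℝ)) (fun x : ℝ => x) a
    rw [this, cfc_const_one ℝ a, cfc_id' ℝ a]
  have hdd : cfc f a * cfc f a = cfc (fun x : ℝ => (1 - x)⁻¹) a := by
    rw [← cfc_mul f f a hf hf]
    apply cfc_congr
    intro x hx
    exact Real.mul_self_sqrt (inv_nonneg.mpr (by linarith [hs x hx]))
  refine ⟨cfc f a, cfc_predicate f a, fun x hx => commute_cfc_of_commute_s19 hx f, ?_, ?_⟩
  · rw [hdd, ← h1a, ← cfc_mul _ _ a hinvc hsubc,
      cfc_congr (g := fun _ : ℝ => (1:ℝ))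
        (fun x hx => inv_mul_cancel₀ (by have := hs x hx; intro h; linarith [sub_eq_zero.mp h])),
      cfc_const_one ℝ a]
  · rw [hdd, ← h1a, ← cfc_mul _ _ a hsubc hinvc,
      cfc_congr (g := fun _ : ℝ => (1:ℝ))
        (fun x hx => mul_inv_cancel₀ (by have := hs x hx; intro h; linarith [sub_eq_zero.mp h])),
      cfc_const_one ℝ a]

end Aux

/-- If `s₁, s₂` are isometries in a unital C*-algebra whose range projections
`p₁ = s₁s₁*`, `p₂ = s₂s₂*` satisfy `‖p₁p₂‖ < 1`, then there is a unitary `u` with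
`u p₁ u* ≤ 1 - p₂` (positivity expressed as being of the form `b* b`); consequently `A`
contains two isometries with exactly orthogonal range projections. -/
theorem exists_unitary_moving_projection {A : Type*} [CStarAlgebra A]
    (s₁ s₂ : A) (h₁ : star s₁ * s₁ = 1) (h₂ : star s₂ * s₂ = 1)
    (hp : ‖(s₁ * star s₁) * (s₂ * star s₂)‖ < 1) :
    (∃ u : A, star u * u = 1 ∧ u * star u = 1 ∧
      ∃ b : A, (1 - s₂ * star s₂) - u * (s₁ * star s₁) * star u = star b * b) ∧
    ∃ t₁ t₂ : A, star t₁ * t₁ = 1 ∧ star t₂ * t₂ = 1 ∧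
      (t₁ * star t₁) * (t₂ * star t₂) = 0 := by
  rcases subsingleton_or_nontrivial A with hA | hA
  · exact ⟨⟨1, Subsingleton.elim _ _, Subsingleton.elim _ _, 0, Subsingleton.elim _ _⟩,
      1, 1, Subsingleton.elim _ _, Subsingleton.elim _ _, Subsingleton.elim _ _⟩
  letI := CStarAlgebra.spectralOrder A
  haveI := CStarAlgebra.spectralOrderedRing A
  obtain ⟨p, hp_def⟩ : ∃ x : A, x = s₂ * star s₂ := ⟨_, rfl⟩
  obtain ⟨q, hq_def⟩ : ∃ x : A, x = s₁ * star s₁ := ⟨_, rfl⟩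
  rw [← hp_def, ← hq_def] at hp ⊢
  have hq : q * q = q := by rw [hq_def, mul_assoc, ← mul_assoc (star s₁), h₁, one_mul]
  have hp2 : p * p = p := by rw [hp_def, mul_assoc, ← mul_assoc (star s₂), h₂, one_mul]
  have hsq : star q = q := by rw [hq_def]; simp [star_mul, mul_assoc]
  have hsp : star p = p := by rw [hp_def]; simp [star_mul, mul_assoc]
  have hq' := idem_l hq
  have hp2' := idem_l hp2
  have h1qidem : (1 - q) * (1 - q) = 1 - q := by
    rw [sub_mul, one_mul, mul_sub, mul_one, hq]; abel
  have h1pidem : (1 - p) * (1 - p) = 1 - p := by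
    rw [sub_mul, one_mul, mul_sub, mul_one, hp2]; abel
  have hs1q : star (1 - q : A) = 1 - q := by simp [hsq]
  have hs1p : star (1 - p : A) = 1 - p := by simp [hsp]
  obtain ⟨t, ht_def⟩ : ∃ x : A, x = q * (p * q) := ⟨_, rfl⟩
  have hqt : q * t = t := by rw [ht_def]; exact idem_l hq _
  have htq : t * q = t := by rw [ht_def]; simp only [mul_assoc, hq]
  have hst : star t = t := by rw [ht_def]; simp [star_mul, hsq, hsp, mul_assoc]
  have htsa : IsSelfAdjoint t := hst
  have ht_eq : t = star (p * q) * (p * q) := by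
    rw [ht_def]; simp only [star_mul, hsq, hsp, mul_assoc, hp2']
  have htnn : (0 : A) ≤ t := by rw [ht_eq]; exact star_mul_self_nonneg _
  have hpq_norm : ‖p * q‖ = ‖q * p‖ := by
    have h : star (q * p) = p * q := by rw [star_mul, hsq, hsp]
    rw [← h, norm_star]
  have htnorm : ‖t‖ < 1 := by
    rw [ht_eq, CStarRing.norm_star_mul_self, hpq_norm]
    nlinarith [norm_nonneg (q * p), hp]
  have hspec_t : ∀ x ∈ spectrum ℝ t, x < 1 := by
    intro x hx
    have h := spectrum.norm_le_norm_of_mem hx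
    rw [Real.norm_eq_abs] at h
    calc x ≤ |x| := le_abs_self x
    _ ≤ ‖t‖ := h
    _ < 1 := htnorm
  obtain ⟨d, hdsa, hdcomm, hd1, hd1'⟩ := exists_inv_sqrt_one_sub htsa hspec_t
  have hqtc : Commute q t := by rw [Commute, SemiconjBy, hqt, htq]
  have hqd : Commute q d := hdcomm q hqtc
  have htd : Commute t d := hdcomm t (Commute.refl t)
  have hqsub : q * (1 - t) = q - t := by rw [mul_sub, mul_one, hqt]
  obtain ⟨s, hs_def⟩ : ∃ x : A, x = (1 - p) * (q * d) := ⟨_, rfl⟩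
  have hs_star : star s = d * (q * (1 - p)) := by
    rw [hs_def, star_mul, star_mul, hsq, hdsa.star_eq, hs1p, mul_assoc]
  have hq1p : q * ((1 - p) * q) = q - t := by
    rw [sub_mul, one_mul, mul_sub, hq, ht_def]
  have hqs_left : q * s = (q - t) * d := by
    rw [hs_def, ← hq1p]
    simp only [mul_assoc]
  have hsq_star : star s * q = d * (q - t) := by
    have h := congrArg star hqs_left
    rwa [star_mul, star_mul, hsq, hdsa.star_eq, star_sub, hsq, hst] at h
  have hss : star s * s = q := by
    rw [hs_star, hs_def]
    calc (d * (q * (1 - p))) * ((1 - p) * (q * d))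
        = d * (q * ((1 - p) * ((1 - p) * (q * d)))) := by simp only [mul_assoc]
    _ = d * (q * ((1 - p) * (q * d))) := by rw [idem_l h1pidem]
    _ = d * ((q * ((1 - p) * q)) * d) := by simp only [mul_assoc]
    _ = d * ((q - t) * d) := by rw [hq1p]
    _ = (q - t) * (d * d) := by
        have hc : Commute (q - t) d := hqd.sub_left htd
        rw [← mul_assoc, ← hc.eq, mul_assoc]
    _ = q * ((1 - t) * (d * d)) := by rw [← hqsub, mul_assoc]
    _ = q := by rw [hd1', mul_one]
  have hsq_s : s * q = s := by
    rw [hs_def]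
    simp only [mul_assoc, ← hqd.eq, hq']
  obtain ⟨e, he_def⟩ : ∃ x : A, x = s * star s := ⟨_, rfl⟩
  have hse : star e = e := by rw [he_def]; simp [star_mul]
  have hqstars : q * star s = star s := by
    have h := congrArg star hsq_s
    rwa [star_mul, hsq] at h
  have he2 : e * e = e := by
    rw [he_def]
    calc (s * star s) * (s * star s) = s * ((star s * s) * star s) := by simp only [mul_assoc]
    _ = s * (q * star s) := by rw [hss]
    _ = s * star s := by rw [hqstars]
  have he' := idem_l he2
  have h1p_zero : p * (1 - p) = 0 := by rw [mul_sub, mul_one, hp2, sub_self]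
  have hpe : p * e = 0 := by
    rw [he_def, hs_def]
    simp only [← mul_assoc, h1p_zero, zero_mul]
  have hep : e * p = 0 := by
    have h := congrArg star hpe
    rwa [star_mul, hse, hsp, star_zero] at h
  have hqeq : q * (e * q) = q - t := by
    calc q * (e * q) = (q * s) * (star s * q) := by rw [he_def]; simp only [mul_assoc]
    _ = ((q - t) * d) * (d * (q - t)) := by rw [hqs_left, hsq_star]
    _ = ((q - t) * (d * d)) * (q - t) := by simp only [mul_assoc]
    _ = (q * ((1 - t) * (d * d))) * (q - t) := by simp only [← hqsub, mul_assoc]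
    _ = q * (q - t) := by rw [hd1', mul_one]
    _ = q - t := by rw [mul_sub, hq, hqt]
  obtain ⟨V, hV_def⟩ : ∃ x : A, x = (1 - q) * s := ⟨_, rfl⟩
  have hVstar : star V = star s * (1 - q) := by rw [hV_def, star_mul, hs1q]
  have h1qV : (1 - q) * V = V := by rw [hV_def, ← mul_assoc, h1qidem]
  have hqpt : q * (p * t) = t * t := by
    rw [ht_def]; simp only [mul_assoc, hq']
  have hexp : q * ((1 - p) * (q - t)) = q - t - (t - t * t) := by
    simp only [mul_sub, sub_mul, one_mul, mul_one, hq, hqt]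
    rw [← ht_def, hqpt]
  have hVsV : star V * V = t := by
    have h3 : star V * V = star s * s - star s * (q * s) := by
      rw [hVstar, hV_def]
      calc (star s * (1 - q)) * ((1 - q) * s)
          = star s * ((1 - q) * ((1 - q) * s)) := by simp only [mul_assoc]
      _ = star s * ((1 - q) * s) := by rw [idem_l h1qidem]
      _ = star s * s - star s * (q * s) := by rw [sub_mul, one_mul, mul_sub]
    rw [h3, hss, hqs_left, hs_star]
    have h4 : (d * (q * (1 - p))) * ((q - t) * d) = (q - t - (t - t * t)) * (d * d) := by
      calc (d * (q * (1 - p))) * ((q - t) * d)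
          = d * ((q * ((1 - p) * (q - t))) * d) := by simp only [mul_assoc]
      _ = d * ((q - t - (t - t * t)) * d) := by rw [hexp]
      _ = (q - t - (t - t * t)) * (d * d) := by
          have hc : Commute (q - t - (t - t * t)) d :=
            (hqd.sub_left htd).sub_left (htd.sub_left (htd.mul_left htd))
          rw [← mul_assoc, ← hc.eq, mul_assoc]
    rw [h4]
    have h5 : (q - t - (t - t * t)) * (d * d) = (q - t) * ((1 - t) * (d * d)) := by
      have h6 : (q - t) * (1 - t) = q - t - (t - t * t) := by
        rw [sub_mul, mul_sub, mul_sub, mul_one, mul_one, hqt]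
      rw [← h6, mul_assoc]
    rw [h5, hd1', mul_one]
    abel
  obtain ⟨B, hB_def⟩ : ∃ x : A, x = V * star V := ⟨_, rfl⟩
  have hBnn : (0 : A) ≤ B := by rw [hB_def]; exact mul_star_self_nonneg V
  have hBsa : IsSelfAdjoint B := by
    rw [hB_def]; show star _ = _; rw [star_mul, star_star]
  have hBnorm : ‖B‖ = ‖t‖ := by
    rw [hB_def]
    calc ‖V * star V‖ = ‖V‖ * ‖V‖ := CStarRing.norm_self_mul_star
    _ = ‖star V * V‖ := (CStarRing.norm_star_mul_self).symm
    _ = ‖t‖ := by rw [hVsV]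
  have ht_le : t ≤ ‖t‖ • q := by
    have h0 : t ≤ algebraMap ℝ A ‖t‖ := IsSelfAdjoint.le_algebraMap_norm_self htsa
    have h1 := star_left_conjugate_le_conjugate h0 q
    rw [hsq] at h1
    have hL : q * t * q = t := by rw [hqt, htq]
    have hR : q * algebraMap ℝ A ‖t‖ * q = ‖t‖ • q := by
      rw [Algebra.algebraMap_eq_smul_one, mul_smul_comm, mul_one, smul_mul_assoc, hq]
    rwa [hL, hR] at h1
  have hB_le : B ≤ ‖t‖ • (1 - q) := by
    have h0 : B ≤ algebraMap ℝ A ‖B‖ := IsSelfAdjoint.le_algebraMap_norm_self hBsa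
    have h1 := star_left_conjugate_le_conjugate h0 (1 - q)
    rw [hs1q] at h1
    have hstarV1q : star V * (1 - q) = star V := by rw [← hs1q, ← star_mul, h1qV]
    have hL : (1 - q) * B * (1 - q) = B := by
      rw [hB_def, ← mul_assoc, h1qV, mul_assoc, hstarV1q]
    have hR : (1 - q) * algebraMap ℝ A ‖B‖ * (1 - q) = ‖t‖ • (1 - q) := by
      rw [Algebra.algebraMap_eq_smul_one, mul_smul_comm, mul_one, smul_mul_assoc,
        h1qidem, hBnorm]
    rwa [hL, hR] at h1
  obtain ⟨k, hk_def⟩ : ∃ x : A, x = q + e - q * e - e * q := ⟨_, rfl⟩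
  have hBe : B = (1 - q) * (e * (1 - q)) := by
    rw [hB_def, hVstar, hV_def, he_def]
    simp only [mul_assoc]
  have hkB : k = t + B := by
    rw [hk_def, hBe]
    simp only [mul_sub, sub_mul, one_mul, mul_one]
    rw [hqeq]
    abel
  have hksa : IsSelfAdjoint k := by
    rw [hk_def]
    show star _ = _
    simp only [star_sub, star_add, star_mul, hsq, hse]
    abel
  have hknn : (0 : A) ≤ k := by
    have h : star (q - e) * (q - e) = k := by
      rw [star_sub, hsq, hse, hk_def]
      simp only [sub_mul, mul_sub]
      rw [hq, he2]
      abel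
    rw [← h]
    exact star_mul_self_nonneg _
  have hkle : k ≤ ‖t‖ • (1 : A) := by
    rw [hkB]
    calc t + B ≤ ‖t‖ • q + ‖t‖ • (1 - q) := add_le_add ht_le hB_le
    _ = ‖t‖ • (1 : A) := by rw [← smul_add]; congr 1; abel
  have hknorm : ‖k‖ < 1 := by
    have h1 := CStarAlgebra.norm_le_norm_of_nonneg_of_le hknn hkle
    have h2 : ‖‖t‖ • (1 : A)‖ = ‖t‖ := by
      rw [norm_smul, norm_one, mul_one, Real.norm_eq_abs, abs_of_nonneg (norm_nonneg t)]
    rw [h2] at h1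
    exact lt_of_le_of_lt h1 htnorm
  have hspec_k : ∀ x ∈ spectrum ℝ k, x < 1 := by
    intro x hx
    have h := spectrum.norm_le_norm_of_mem hx
    rw [Real.norm_eq_abs] at h
    calc x ≤ |x| := le_abs_self x
    _ ≤ ‖k‖ := h
    _ < 1 := hknorm
  obtain ⟨n, hnsa, hncomm, hn1, hn1'⟩ := exists_inv_sqrt_one_sub hksa hspec_k
  have hqk : Commute q k := by
    have hqk1 : q * k = t := by
      rw [hk_def]
      simp only [mul_sub, mul_add]
      rw [hq, hq' e, hqeq]
      abel
    have hqk2 : k * q = t := by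
      rw [hk_def]
      simp only [sub_mul, add_mul, mul_assoc, hq]
      rw [hqeq]
      abel
    rw [Commute, SemiconjBy, hqk1, hqk2]
  have hek : Commute e k := by
    rw [Commute, SemiconjBy, hk_def]
    simp only [mul_add, mul_sub, add_mul, sub_mul, mul_assoc, he2, he']
    abel
  obtain ⟨z, hz_def⟩ : ∃ x : A, x = e * q + (1 - e) * (1 - q) := ⟨_, rfl⟩
  have hz_star : star z = q * e + (1 - q) * (1 - e) := by
    rw [hz_def]
    simp [star_add, star_mul, star_sub, star_one, hsq, hse]
  have hz1 : star z * z = 1 - k := by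
    rw [hz_star, hz_def, hk_def]
    simp only [add_mul, mul_add, sub_mul, mul_sub, one_mul, mul_one, mul_assoc, hq, he2,
      hq', he']
    abel
  have hz2 : z * star z = 1 - k := by
    rw [hz_star, hz_def, hk_def]
    simp only [add_mul, mul_add, sub_mul, mul_sub, one_mul, mul_one, mul_assoc, hq, he2,
      hq', he']
    abel
  have hzq_ez : z * q = e * z := by
    rw [hz_def]
    simp only [add_mul, mul_add, sub_mul, mul_sub, one_mul, mul_one, mul_assoc, hq, he2,
      hq', he']
    abel
  have hzk : Commute z k := by
    rw [hz_def]
    exact (hek.mul_left hqk).add_left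
      (((Commute.one_left k).sub_left hek).mul_left ((Commute.one_left k).sub_left hqk))
  have hqn : Commute q n := hncomm q hqk
  have hzn : Commute z n := hncomm z hzk
  have h1k_n : Commute (1 - k) n := hncomm _ ((Commute.one_left k).sub_left (Commute.refl k))
  obtain ⟨u, hu_def⟩ : ∃ x : A, x = z * n := ⟨_, rfl⟩
  have hu_star : star u = n * star z := by rw [hu_def, star_mul, hnsa.star_eq]
  have hu1 : star u * u = 1 := by
    rw [hu_star, hu_def]
    calc (n * star z) * (z * n) = n * ((star z * z) * n) := by simp only [mul_assoc]
    _ = n * ((1 - k) * n) := by rw [hz1]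
    _ = n * (n * (1 - k)) := by rw [h1k_n.eq]
    _ = 1 := by rw [← mul_assoc, hn1]
  have hu2 : u * star u = 1 := by
    rw [hu_star, hu_def]
    calc (z * n) * (n * star z) = (z * (n * n)) * star z := by simp only [mul_assoc]
    _ = ((n * n) * z) * star z := by rw [(hzn.mul_right hzn).eq]
    _ = (n * n) * (z * star z) := by rw [mul_assoc]
    _ = 1 := by rw [hz2, hn1]
  have hue : u * q * star u = e := by
    rw [hu_star, hu_def]
    calc ((z * n) * q) * (n * star z) = z * ((n * q) * (n * star z)) := by simp only [mul_assoc]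
    _ = z * ((q * n) * (n * star z)) := by rw [← hqn.eq]
    _ = (z * q) * ((n * n) * star z) := by simp only [mul_assoc]
    _ = (e * z) * ((n * n) * star z) := by rw [hzq_ez]
    _ = e * (((n * n) * z) * star z) := by
        rw [mul_assoc]
        rw [← (hzn.mul_right hzn).eq]
        simp only [mul_assoc]
    _ = e * ((n * n) * (z * star z)) := by simp only [mul_assoc]
    _ = e := by rw [hz2, hn1, mul_one]
  have hb_sa : star (1 - p - e) = 1 - p - e := by simp [hsp, hse]
  have hb_idem : (1 - p - e) * (1 - p - e) = 1 - p - e := by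
    simp only [sub_mul, mul_sub, mul_one, one_mul, hp2, he2, hpe, hep, sub_zero]
    abel
  constructor
  · refine ⟨u, hu1, hu2, 1 - p - e, ?_⟩
    rw [hue, hb_sa, hb_idem]
  · refine ⟨u * s₁, s₂, ?_, h₂, ?_⟩
    · rw [star_mul, mul_assoc, ← mul_assoc (star u), hu1, one_mul, h₁]
    · rw [star_mul, ← hp_def]
      have h9 : u * s₁ * (star s₁ * star u) = u * q * star u := by
        rw [hq_def]
        simp only [mul_assoc]
      rw [h9, hue, hep]
end
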